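/- arXiv:1509.05896 — 6 statements merged into one kernel-verified Lean document; each statement's English description precedes it below -/
import Mathlib

section
/- Let G be an induced subgraph of G' such that every connected component C of G' − V(G) has at most c vertices and the neighborhood of C inside V(G) is a clique of G. Then the tree-depth of G' is at most the tree-depth of G plus c. -/
/-- A tree-depth decomposition of `G`: identifying (via the bijection μ) the nodes of the
rooted forest with the vertices, it is given by the ancestor-or-equal relation `le`,
a partial order in which the ancestors of any element form a chain, and such that the
endpoints of every edge of `G` are comparable. -/
structure TreeDepthDecomp {V : Type} (G : SimpleGraph V) where
  le : V → V → Prop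
  le_refl : ∀ a, le a a
  le_trans : ∀ {a b c}, le a b → le b c → le a c
  le_antisymm : ∀ {a b}, le a b → le b a → a = b
  ancestors_chain : ∀ {a b c}, le a c → le b c → le a b ∨ le b a
  adj_comparable : ∀ {u w}, G.Adj u w → le u w ∨ le w u

/-- The decomposition has depth at most `d`: every chain (in particular every
root-to-leaf path) has at most `d` nodes. -/
def TreeDepthDecomp.DepthLE {V : Type} {G : SimpleGraph V}
    (D : TreeDepthDecomp G) (d : ℕ) : Prop :=
  ∀ s : Finset V, (∀ a ∈ s, ∀ b ∈ s, D.le a b ∨ D.le b a) → s.card ≤ d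

/-- if `G = G'[S]` is an induced subgraph of `G'` such that every connected
component `C` of `G' - S` has at most `c` vertices and the neighborhood of `C` inside `S`
is a clique of `G`, then the tree-depth of `G'` is at most the tree-depth of `G` plus `c`. -/
theorem treedepth_of_augmented {V : Type} [Fintype V]
    (G' : SimpleGraph V) (S : Set V) (c d : ℕ)
    (hcard : ∀ C : (G'.induce Sᶜ).ConnectedComponent, C.supp.ncard ≤ c)
    (hclique : ∀ C : (G'.induce Sᶜ).ConnectedComponent,
      G'.IsClique {w | w ∈ S ∧ ∃ v ∈ C.supp, G'.Adj w ↑v})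
    (D : TreeDepthDecomp (G'.induce S)) (hD : D.DepthLE d) :
    ∃ D' : TreeDepthDecomp G', D'.DepthLE (d + c) := by
  classical
  letI : LinearOrder V := LinearOrder.lift' (Fintype.equivFin V) (Fintype.equivFin V).injective
  -- component of an outside vertex
  let cmp : ∀ x : V, x ∉ S → (G'.induce Sᶜ).ConnectedComponent := fun x hx =>
    (G'.induce Sᶜ).connectedComponentMk ⟨x, hx⟩
  -- the neighborhood of a component inside `S`
  let NC : (G'.induce Sᶜ).ConnectedComponent → Set ↥S := fun C =>
    {w | ∃ v ∈ C.supp, G'.Adj ↑w ↑v}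
  have hNCcomp : ∀ (C : (G'.induce Sᶜ).ConnectedComponent) (w1 w2 : ↥S),
      w1 ∈ NC C → w2 ∈ NC C → D.le w1 w2 ∨ D.le w2 w1 := by
    intro C w1 w2 h1 h2
    by_cases he : w1 = w2
    · exact Or.inl (he ▸ D.le_refl w1)
    · have hadj : G'.Adj ↑w1 ↑w2 :=
        hclique C ⟨w1.2, h1⟩ ⟨w2.2, h2⟩ (fun h => he (Subtype.ext h))
      exact D.adj_comparable hadj
  let le' : V → V → Prop := fun a b =>
    (∃ (ha : a ∈ S) (hb : b ∈ S), D.le ⟨a, ha⟩ ⟨b, hb⟩) ∨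
    (∃ (ha : a ∈ S) (hb : b ∉ S), ∃ w ∈ NC (cmp b hb), D.le ⟨a, ha⟩ w) ∨
    (∃ (ha : a ∉ S) (hb : b ∉ S), cmp a ha = cmp b hb ∧ a ≤ b)
  refine ⟨⟨le', ?_, ?_, ?_, ?_, ?_⟩, ?_⟩
  · -- refl
    intro a
    by_cases ha : a ∈ S
    · exact Or.inl ⟨ha, ha, D.le_refl _⟩
    · exact Or.inr (Or.inr ⟨ha, ha, rfl, le_refl a⟩)
  · -- trans
    rintro a b c (⟨ha, hb, hab⟩ | ⟨ha, hb, w, hw, hab⟩ | ⟨ha, hb, hcmp, hab⟩) hbc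
    · rcases hbc with ⟨hb', hc, hbc⟩ | ⟨hb', hc, w, hw, hbc⟩ | ⟨hb', hc, hcmp, hbc⟩
      · exact Or.inl ⟨ha, hc, D.le_trans hab hbc⟩
      · exact Or.inr (Or.inl ⟨ha, hc, w, hw, D.le_trans hab hbc⟩)
      · exact absurd hb hb'
    · rcases hbc with ⟨hb', hc, hbc⟩ | ⟨hb', hc, w', hw', hbc⟩ | ⟨hb', hc, hcmp, hbc⟩
      · exact absurd hb' hb
      · exact absurd hb' hb
      · exact Or.inr (Or.inl ⟨ha, hc, w, hcmp ▸ hw, hab⟩)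
    · rcases hbc with ⟨hb', hc, hbc⟩ | ⟨hb', hc, w', hw', hbc⟩ | ⟨hb', hc, hcmp', hbc⟩
      · exact absurd hb' hb
      · exact absurd hb' hb
      · exact Or.inr (Or.inr ⟨ha, hc, hcmp.trans hcmp', le_trans hab hbc⟩)
  · -- antisymm
    rintro a b (⟨ha, hb, hab⟩ | ⟨ha, hb, w, hw, hab⟩ | ⟨ha, hb, hcmp, hab⟩) hba
    · rcases hba with ⟨hb', ha', hba⟩ | ⟨hb', ha', w, hw, hba⟩ | ⟨hb', ha', hcmp, hba⟩
      · exact congrArg Subtype.val (D.le_antisymm hab hba)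
      · exact absurd ha ha'
      · exact absurd hb hb'
    · rcases hba with ⟨hb', ha', hba⟩ | ⟨hb', ha', w', hw', hba⟩ | ⟨hb', ha', hcmp, hba⟩
      · exact absurd hb' hb
      · exact absurd hb' hb
      · exact absurd ha ha'
    · rcases hba with ⟨hb', ha', hba⟩ | ⟨hb', ha', w', hw', hba⟩ | ⟨hb', ha', hcmp', hba⟩
      · exact absurd hb' hb
      · exact absurd hb' hb
      · exact le_antisymm hab hba
  · -- ancestors_chain
    rintro a b c (⟨ha, hc, hac⟩ | ⟨ha, hc, w1, hw1, hac⟩ | ⟨ha, hc, hcmp1, hac⟩) hbc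
    · rcases hbc with ⟨hb, hc', hbc⟩ | ⟨hb, hc', w2, hw2, hbc⟩ | ⟨hb, hc', hcmp2, hbc⟩
      · rcases D.ancestors_chain hac hbc with h | h
        · exact Or.inl (Or.inl ⟨ha, hb, h⟩)
        · exact Or.inr (Or.inl ⟨hb, ha, h⟩)
      · exact absurd hc hc'
      · exact absurd hc hc'
    · rcases hbc with ⟨hb, hc', hbc⟩ | ⟨hb, hc', w2, hw2, hbc⟩ | ⟨hb, hc', hcmp2, hbc⟩
      · exact absurd hc' hc
      · rcases hNCcomp _ w1 w2 hw1 hw2 with h | h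
        · rcases D.ancestors_chain (D.le_trans hac h) hbc with h' | h'
          · exact Or.inl (Or.inl ⟨ha, hb, h'⟩)
          · exact Or.inr (Or.inl ⟨hb, ha, h'⟩)
        · rcases D.ancestors_chain hac (D.le_trans hbc h) with h' | h'
          · exact Or.inl (Or.inl ⟨ha, hb, h'⟩)
          · exact Or.inr (Or.inl ⟨hb, ha, h'⟩)
      · exact Or.inl (Or.inr (Or.inl ⟨ha, hb, w1, hcmp2 ▸ hw1, hac⟩))
    · rcases hbc with ⟨hb, hc', hbc⟩ | ⟨hb, hc', w2, hw2, hbc⟩ | ⟨hb, hc', hcmp2, hbc⟩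
      · exact absurd hc' hc
      · exact Or.inr (Or.inr (Or.inl ⟨hb, ha, w2, hcmp1 ▸ hw2, hbc⟩))
      · rcases le_total a b with h | h
        · exact Or.inl (Or.inr (Or.inr ⟨ha, hb, hcmp1.trans hcmp2.symm, h⟩))
        · exact Or.inr (Or.inr (Or.inr ⟨hb, ha, hcmp2.trans hcmp1.symm, h⟩))
  · -- adj_comparable
    intro u w huw
    by_cases hu : u ∈ S <;> by_cases hw : w ∈ S
    · rcases D.adj_comparable (u := ⟨u, hu⟩) (w := ⟨w, hw⟩) huw with h | h
      · exact Or.inl (Or.inl ⟨hu, hw, h⟩)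
      · exact Or.inr (Or.inl ⟨hw, hu, h⟩)
    · refine Or.inl (Or.inr (Or.inl ⟨hu, hw, ⟨u, hu⟩, ⟨⟨w, hw⟩, rfl, huw⟩, D.le_refl _⟩))
    · refine Or.inr (Or.inr (Or.inl ⟨hw, hu, ⟨w, hw⟩, ⟨⟨u, hu⟩, rfl, huw.symm⟩, D.le_refl _⟩))
    · have hcc : cmp u hu = cmp w hw :=
        SimpleGraph.ConnectedComponent.sound
          (SimpleGraph.Adj.reachable (show (G'.induce Sᶜ).Adj ⟨u, hu⟩ ⟨w, hw⟩ from huw))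
      rcases le_total u w with h | h
      · exact Or.inl (Or.inr (Or.inr ⟨hu, hw, hcc, h⟩))
      · exact Or.inr (Or.inr (Or.inr ⟨hw, hu, hcc.symm, h⟩))
  · -- depth
    intro s hs
    have hsplit : (s.filter (· ∈ S)).card + (s.filter (¬ · ∈ S)).card = s.card :=
      Finset.card_filter_add_card_filter_not _
    have h1 : (s.filter (· ∈ S)).card ≤ d := by
      rw [← Finset.card_subtype]
      apply hD
      rintro ⟨a, ha⟩ has ⟨b, hb⟩ hbs
      rw [Finset.mem_subtype] at has hbs
      rcases hs a has b hbs with (⟨ha', hb', h⟩ | ⟨ha', hb', _⟩ | ⟨ha', _, _⟩) |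
        (⟨hb', ha', h⟩ | ⟨hb', ha', _⟩ | ⟨hb', _, _⟩)
      · exact Or.inl h
      · exact absurd hb hb'
      · exact absurd ha ha'
      · exact Or.inr h
      · exact absurd ha ha'
      · exact absurd hb hb'
    have h2 : (s.filter (¬ · ∈ S)).card ≤ c := by
      rcases (s.filter (¬ · ∈ S)).eq_empty_or_nonempty with he | ⟨x0, hx0⟩
      · simp [he]
      · have hx0' := Finset.mem_filter.mp hx0
        rw [← Finset.card_subtype (¬ · ∈ S) s]
        have hinj : Function.Injective (fun p : {x // ¬ x ∈ S} => (⟨p.1, p.2⟩ : ↥Sᶜ)) := by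
          intro p q h
          exact Subtype.ext (congrArg Subtype.val h)
        -- all elements lie in the component of x0
        have hcomp : ∀ p ∈ s.subtype (¬ · ∈ S),
            (⟨p.1, p.2⟩ : ↥Sᶜ) ∈ (cmp x0 hx0'.2).supp := by
          rintro ⟨a, ha⟩ has
          rw [Finset.mem_subtype] at has
          rcases hs a has x0 hx0'.1 with (⟨ha', _, _⟩ | ⟨ha', _, _⟩ | ⟨_, _, hcc, _⟩) |
            (⟨hx', _, _⟩ | ⟨hx', _, _⟩ | ⟨_, _, hcc, _⟩)
          · exact absurd ha' ha
          · exact absurd ha' ha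
          · exact hcc
          · exact absurd hx' hx0'.2
          · exact absurd hx' hx0'.2
          · exact hcc.symm
        calc (s.subtype (¬ · ∈ S)).card
            = ((s.subtype (¬ · ∈ S)).image
                (fun p : {x // ¬ x ∈ S} => (⟨p.1, p.2⟩ : ↥Sᶜ))).card :=
              (Finset.card_image_of_injective _ hinj).symm
          _ ≤ c := by
              refine le_trans ?_ (hcard (cmp x0 hx0'.2))
              rw [← Set.ncard_coe_finset]
              apply Set.ncard_le_ncard _ (Set.toFinite _)
              intro q hq
              simp only [Finset.coe_image, Set.mem_image, Finset.mem_coe] at hq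
              obtain ⟨p, hp, rfl⟩ := hq
              exact hcomp p hp
    omega
end

section
/- Let G be an induced subgraph of G' such that every connected component C of G' − V(G) has at most c vertices and the neighborhood of C inside V(G) is a clique of G. Then the treewidth of G' is at most the treewidth of G plus c. -/
open SimpleGraph



section aux
variable {ι : Type} {T : SimpleGraph ι}

/-- In an acyclic graph, any path between two vertices of a connected induced set
stays inside the set. -/
lemma path_support_subset (hT : T.IsAcyclic) {s : Set ι}
    (hs : (T.induce s).Connected) {x y : ι} (hx : x ∈ s) (hy : y ∈ s)
    {p : T.Walk x y} (hp : p.IsPath) : ∀ z ∈ p.support, z ∈ s := by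
  classical
  obtain ⟨q⟩ := hs ⟨x, hx⟩ ⟨y, hy⟩
  let f : T.induce s →g T := (SimpleGraph.Embedding.induce s).toHom
  let q' : T.Walk x y := q.map f
  have hq'sup : ∀ z ∈ q'.support, z ∈ s := by
    intro z hz
    replace hz : z ∈ (q.map f).support := hz
    rw [Walk.support_map] at hz
    obtain ⟨⟨z', hz'⟩, _, rfl⟩ := List.mem_map.mp hz
    exact hz'
  have hpe : p = q'.bypass := by
    have h2 := hT.path_unique ⟨p, hp⟩ ⟨q'.bypass, q'.bypass_isPath⟩
    exact congrArg Subtype.val h2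
  intro z hz
  exact hq'sup z (q'.support_bypass_subset (hpe ▸ hz))

/-- The "gate" of a connected induced set with respect to a vertex `i`:
a vertex of `s` lying in every connected induced set containing `i` and meeting `s`. -/
lemma exists_gate (hT : T.IsTree) {s : Set ι}
    (hs : (T.induce s).Connected) (i : ι) :
    ∃ a ∈ s, ∀ t : Set ι, (T.induce t).Connected → i ∈ t →
      (∃ b ∈ s, b ∈ t) → a ∈ t := by
  classical
  have hne : s.Nonempty := by
    obtain ⟨⟨a, ha⟩⟩ := hs.nonempty
    exact ⟨a, ha⟩
  obtain ⟨a, ha, hmin⟩ : ∃ a ∈ s, ∀ b ∈ s, T.dist i a ≤ T.dist i b := by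
    obtain ⟨a, ha, hma⟩ := Nat.sInf_mem (hne.image (fun b => T.dist i b))
    refine ⟨a, ha, fun b hb => ?_⟩
    simp only at hma
    rw [hma]
    exact Nat.sInf_le ⟨b, hb, rfl⟩
  obtain ⟨p0, hp0⟩ := hT.isConnected.exists_walk_length_eq_dist i a
  set p := p0.bypass with hpdef
  have hpPath : p.IsPath := p0.bypass_isPath
  have hplen : p.length = T.dist i a :=
    le_antisymm (hp0 ▸ p0.length_bypass_le) (SimpleGraph.dist_le p)
  have key : ∀ y ∈ p.support, y ∈ s → y = a := by
    intro y hy hys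
    have h1 := congrArg Walk.length (p.take_spec hy)
    rw [Walk.length_append] at h1
    have h2 : T.dist i y ≤ (p.takeUntil y hy).length := SimpleGraph.dist_le _
    have h3 : T.dist i a ≤ T.dist i y := hmin y hys
    have h4 : (p.dropUntil y hy).length = 0 := by omega
    exact (Walk.eq_of_length_eq_zero h4)
  refine ⟨a, ha, ?_⟩
  rintro t ht hit ⟨b, hbs, hbt⟩
  obtain ⟨r0⟩ := hT.isConnected a b
  set r := r0.bypass with hrdef
  have hrPath : r.IsPath := r0.bypass_isPath
  have hrsub : ∀ z ∈ r.support, z ∈ s :=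
    path_support_subset hT.IsAcyclic hs ha hbs hrPath
  have hraN : a ∉ r.support.tail := by
    have := hrPath.support_nodup
    rw [Walk.support_eq_cons] at this
    exact (List.nodup_cons.mp this).1
  have hdisj : ∀ z ∈ p.support, z ∉ r.support.tail := by
    intro z hzp hzr
    have hz_s : z ∈ s := hrsub z (List.mem_of_mem_tail hzr)
    exact hraN ((key z hzp hz_s) ▸ hzr)
  have hPath : (p.append r).IsPath := by
    rw [Walk.isPath_def, Walk.support_append]
    refine List.Nodup.append hpPath.support_nodup ?_ hdisj
    have := hrPath.support_nodup
    rw [Walk.support_eq_cons] at this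
    exact (List.nodup_cons.mp this).2
  have hsub := path_support_subset hT.IsAcyclic ht hit hbt hPath
  exact hsub a (by rw [Walk.mem_support_append_iff]; exact Or.inl p.end_mem_support)

end aux

/-- Lift a walk whose support lies in the image of an "induced" injective hom. -/
lemma exists_lift {ιa ιb : Type} {Ta : SimpleGraph ιa} {Tb : SimpleGraph ιb} (f : Ta →g Tb)
    (hadj : ∀ a b, Tb.Adj (f a) (f b) → Ta.Adj a b) :
    ∀ {u v : ιb} (p : Tb.Walk u v), (∀ z ∈ p.support, ∃ a, z = f a) →
    ∃ (x y : ιa) (hx : u = f x) (hy : v = f y) (q : Ta.Walk x y),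
      q.map f = p.copy hx hy := by
  intro u v p
  induction p with
  | nil =>
    intro h
    obtain ⟨a, ha⟩ := h _ (Walk.start_mem_support _)
    exact ⟨a, a, ha, ha, Walk.nil, by subst ha; rfl⟩
  | @cons u w v h p ih =>
    intro hsup
    obtain ⟨x, y, hx, hy, q, hq⟩ := ih (fun z hz => hsup z (by
      rw [Walk.support_cons]; exact List.mem_cons_of_mem _ hz))
    obtain ⟨a, ha⟩ := hsup u (Walk.start_mem_support _)
    subst ha
    subst hx
    subst hy
    refine ⟨a, y, rfl, rfl, Walk.cons (hadj a x h) q, ?_⟩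
    rw [Walk.map_cons, hq, Walk.copy_rfl_rfl, Walk.copy_rfl_rfl]

lemma isCycle_copy {V : Type} {G : SimpleGraph V} {u u' : V} (p : G.Walk u u)
    (h h' : u = u') : (p.copy h h').IsCycle ↔ p.IsCycle := by
  subst h
  exact Iff.rfl

lemma end_mem_support_tail {κ : Type} {H : SimpleGraph κ} {u v : κ}
    (w : H.Walk u v) (hw : 1 ≤ w.length) : v ∈ w.support.tail := by
  cases w with
  | nil => simp at hw
  | cons h r =>
    rw [Walk.support_cons]
    simpa using r.end_mem_support

/-- A vertex with a unique neighbor lies on no cycle. -/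
lemma no_cycle_through_pendant {κ : Type} {H : SimpleGraph κ} {z z0 : κ}
    (hnbr : ∀ y, H.Adj z y → y = z0) {x : κ} {c : H.Walk x x} (hc : c.IsCycle)
    (hz : z ∈ c.support) : False := by
  classical
  set d := c.rotate z hz with hd
  have hdc : d.IsCycle := hc.rotate hz
  have hdlen : 3 ≤ d.length := hdc.three_le_length
  have hdnotnil : ¬ d.Nil := by rw [Walk.not_nil_iff_lt_length]; omega
  obtain ⟨z1, h1, p, hp⟩ := Walk.not_nil_iff.mp hdnotnil
  have hz1 : z1 = z0 := hnbr z1 h1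
  have hdplen : d.length = p.length + 1 := by rw [hp]; simp
  have hplen : 2 ≤ p.length := by omega
  have hprnotnil : ¬ p.reverse.Nil := by
    rw [Walk.not_nil_iff_lt_length, Walk.length_reverse]; omega
  obtain ⟨z2, h2, q, hq⟩ := Walk.not_nil_iff.mp hprnotnil
  have hz2 : z2 = z0 := hnbr z2 h2
  have hpq : p = q.reverse.append (Walk.cons h2.symm Walk.nil) := by
    have h3 := congrArg Walk.reverse hq
    rw [Walk.reverse_reverse] at h3
    rw [h3, Walk.reverse_cons]
  have hsupp : p.support = q.reverse.support ++ [z] := by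
    rw [hpq, Walk.support_append]
    simp
  have hqrlen : 1 ≤ q.reverse.length := by
    have h4 := congrArg Walk.length hq
    rw [Walk.length_reverse, Walk.length_cons] at h4
    rw [Walk.length_reverse]
    omega
  have hz2tail : z2 ∈ q.reverse.support.tail := end_mem_support_tail q.reverse hqrlen
  have hnodup : p.support.Nodup := by
    have h5 := hdc.support_nodup
    rw [hp, Walk.support_cons] at h5
    simpa using h5
  have hqrnodup : q.reverse.support.Nodup := by
    rw [hsupp] at hnodup
    exact List.Nodup.of_append_left hnodup
  rw [Walk.support_eq_cons] at hqrnodup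
  set L := q.reverse.support.tail with hL
  rw [hz2] at hz2tail
  rw [hz1] at hqrnodup
  exact (List.nodup_cons.mp hqrnodup).1 hz2tail

/-- A tree decomposition of `G` over the tree `T`: bags indexed by the nodes of `T`
covering all vertices and edges, with each vertex's set of bags inducing a connected
subtree of `T`. -/
structure TreeDecomp {V ι : Type} (G : SimpleGraph V) (T : SimpleGraph ι) where
  isTree : T.IsTree
  bags : ι → Finset V
  covers_vertex : ∀ v, ∃ i, v ∈ bags i
  covers_edge : ∀ {u w}, G.Adj u w → ∃ i, u ∈ bags i ∧ w ∈ bags i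
  bags_connected : ∀ v, (T.induce {i | v ∈ bags i}).Connected
/-- `G` has treewidth at most `k`: some tree decomposition has all bags of size at most `k+1`. -/
def TreewidthLE {V : Type} (G : SimpleGraph V) (k : ℕ) : Prop :=
  ∃ (ι : Type) (T : SimpleGraph ι) (D : TreeDecomp G T), ∀ i, (D.bags i).card ≤ k + 1


lemma clique_in_bag {ι V' : Type} {T : SimpleGraph ι} {H : SimpleGraph V'} (D : TreeDecomp H T) :
    ∀ (W : Finset V'), H.IsClique (↑W : Set V') → ∃ i, ∀ w ∈ W, w ∈ D.bags i := by
  classical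
  intro W
  induction W using Finset.induction_on with
  | empty =>
    intro _
    have : Nonempty ι := D.isTree.isConnected.nonempty
    exact ⟨Classical.arbitrary ι, by simp⟩
  | @insert v W' hv ih =>
    intro hW
    obtain ⟨i, hi⟩ := ih (hW.subset (by exact_mod_cast Finset.subset_insert v W'))
    obtain ⟨a, ha, hgate⟩ := exists_gate D.isTree (D.bags_connected v) i
    refine ⟨a, ?_⟩
    intro w hw
    rcases Finset.mem_insert.mp hw with rfl | hw'
    · exact ha
    · have hne : v ≠ w := fun h => hv (h ▸ hw')
      have hadj : H.Adj v w := hW (by simp) (by simp [hw']) hne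
      obtain ⟨b, hbv, hbw⟩ := D.covers_edge hadj
      exact hgate {j | w ∈ D.bags j} (D.bags_connected w) (hi w hw') ⟨b, hbv, hbw⟩

/-- if `G = G'[S]` is an induced subgraph of `G'` such that every connected
component `C` of `G' - S` has at most `c` vertices and the neighborhood of `C` inside `S`
is a clique of `G`, then the treewidth of `G'` is at most the treewidth of `G` plus `c`. -/
theorem treewidth_of_augmented {V : Type} [Fintype V]
    (G' : SimpleGraph V) (S : Set V) (c k : ℕ)
    (hcard : ∀ C : (G'.induce Sᶜ).ConnectedComponent, C.supp.ncard ≤ c)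
    (hclique : ∀ C : (G'.induce Sᶜ).ConnectedComponent,
      G'.IsClique {w | w ∈ S ∧ ∃ v ∈ C.supp, G'.Adj w ↑v})
    (hG : TreewidthLE (G'.induce S) k) :
    TreewidthLE G' (k + c) := by
  classical
  obtain ⟨ι, T, D, hDcard⟩ := hG
  set Comp := (G'.induce Sᶜ).ConnectedComponent with hCompDef
  have hNι : Nonempty ι := D.isTree.isConnected.nonempty
  -- the neighbourhood of a component, as a finite clique of `G'.induce S`
  have hWfin : ∀ C : (G'.induce Sᶜ).ConnectedComponent,
      ({w : ↥S | ∃ v ∈ C.supp, G'.Adj ↑w ↑v}).Finite := fun C => Set.toFinite _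
  have hNC : ∀ C : (G'.induce Sᶜ).ConnectedComponent,
      (G'.induce S).IsClique ((hWfin C).toFinset : Set ↥S) := by
    intro C w1 hw1 w2 hw2 hne
    rw [Set.Finite.coe_toFinset] at hw1 hw2
    have h := hclique C ⟨w1.2, hw1⟩ ⟨w2.2, hw2⟩ (fun h => hne (Subtype.ext h))
    exact h
  choose iC hiC using fun C => clique_in_bag D ((hWfin C).toFinset) (hNC C)
  -- support of a component as a finite subset of V
  have hsuppfin : ∀ C : (G'.induce Sᶜ).ConnectedComponent,
      (Subtype.val '' C.supp : Set V).Finite := fun C => Set.toFinite _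
  let sF : Comp → Finset V := fun C => (hsuppfin C).toFinset
  have hsF_card : ∀ C, (sF C).card ≤ c := by
    intro C
    have h1 : (Subtype.val '' C.supp).ncard = C.supp.ncard :=
      Set.ncard_image_of_injective _ Subtype.val_injective
    have h2 : (Subtype.val '' C.supp).ncard = (sF C).card :=
      Set.ncard_eq_toFinset_card _ (hsuppfin C)
    rw [← h2, h1]
    exact hcard C
  have hsF_mem : ∀ (C : Comp) (x : V), x ∈ sF C ↔ ∃ hx : x ∈ Sᶜ, (⟨x, hx⟩ : ↥Sᶜ) ∈ C.supp := by
    intro C x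
    simp only [sF, Set.Finite.mem_toFinset, Set.mem_image]
    constructor
    · rintro ⟨⟨y, hy⟩, hmem, rfl⟩
      exact ⟨hy, hmem⟩
    · rintro ⟨hx, hmem⟩
      exact ⟨⟨x, hx⟩, hmem, rfl⟩
  -- the new tree
  let T' : SimpleGraph (ι ⊕ Comp) :=
    { Adj := fun x y => match x, y with
        | Sum.inl a, Sum.inl b => T.Adj a b
        | Sum.inl a, Sum.inr C => a = iC C
        | Sum.inr C, Sum.inl a => a = iC C
        | Sum.inr _, Sum.inr _ => False
      symm := by refine ⟨?_⟩; rintro (a|C) (b|E) h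
                 · exact h.symm
                 · exact h
                 · exact h
                 · exact h.elim
      loopless := by refine ⟨?_⟩; rintro (a|C) h
                     · exact T.loopless.irrefl a h
                     · exact h }
  have hadj_ll : ∀ a b : ι, T'.Adj (Sum.inl a) (Sum.inl b) ↔ T.Adj a b := fun _ _ => Iff.rfl
  have hadj_rl : ∀ (C : Comp) (a : ι), T'.Adj (Sum.inr C) (Sum.inl a) ↔ a = iC C :=
    fun _ _ => Iff.rfl
  -- the bags
  let bags' : ι ⊕ Comp → Finset V := fun x => match x with
    | Sum.inl a => (D.bags a).image Subtype.val
    | Sum.inr C => (D.bags (iC C)).image Subtype.val ∪ sF C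
  have hmem_inl : ∀ (a : ι) (x : V), x ∈ bags' (Sum.inl a) ↔ ∃ hx : x ∈ S, (⟨x, hx⟩ : ↥S) ∈ D.bags a := by
    intro a x
    simp only [bags', Finset.mem_image]
    constructor
    · rintro ⟨⟨y, hy⟩, hmem, rfl⟩
      exact ⟨hy, hmem⟩
    · rintro ⟨hx, hmem⟩
      exact ⟨⟨x, hx⟩, hmem, rfl⟩
  have hmem_inr : ∀ (C : Comp) (x : V), x ∈ bags' (Sum.inr C) ↔
      (∃ hx : x ∈ S, (⟨x, hx⟩ : ↥S) ∈ D.bags (iC C)) ∨ (∃ hx : x ∈ Sᶜ, (⟨x, hx⟩ : ↥Sᶜ) ∈ C.supp) := by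
    intro C x
    simp only [bags', Finset.mem_union, Finset.mem_image]
    rw [hsF_mem]
    constructor
    · rintro (⟨⟨y, hy⟩, hmem, rfl⟩ | h)
      · exact Or.inl ⟨hy, hmem⟩
      · exact Or.inr h
    · rintro (⟨hx, hmem⟩ | h)
      · exact Or.inl ⟨⟨x, hx⟩, hmem, rfl⟩
      · exact Or.inr h
  -- connectivity of the new tree
  let hinlHom : T →g T' := ⟨Sum.inl, fun {a b} h => h⟩
  have hreach_ll : ∀ a b : ι, T'.Reachable (Sum.inl a) (Sum.inl b) :=
    fun a b => (D.isTree.isConnected a b).map hinlHom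
  have hT'conn : T'.Connected := by
    rw [connected_iff]
    refine ⟨?_, ⟨Sum.inl (Classical.arbitrary ι)⟩⟩
    have hreach : ∀ x : ι ⊕ Comp, T'.Reachable x (Sum.inl (Classical.arbitrary ι)) := by
      rintro (a|C)
      · exact hreach_ll a _
      · exact (Adj.reachable (show T'.Adj (Sum.inr C) (Sum.inl (iC C)) from rfl)).trans
          (hreach_ll _ _)
    exact fun x y => (hreach x).trans (hreach y).symm
  have hT'acyclic : T'.IsAcyclic := by
    intro x cwalk hc
    have hallinl : ∀ z ∈ cwalk.support, ∃ a, z = Sum.inl a := by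
      intro z hz
      cases z with
      | inl a => exact ⟨a, rfl⟩
      | inr C =>
        exfalso
        refine no_cycle_through_pendant (z0 := Sum.inl (iC C)) ?_ hc hz
        rintro (a|E) hy
        · exact congrArg Sum.inl hy
        · exact hy.elim
    obtain ⟨x1, y1, hx1, hy1, q, hq⟩ := exists_lift hinlHom (fun a b h => h) cwalk hallinl
    have hx1y1 : x1 = y1 := Sum.inl_injective (hx1.symm.trans hy1)
    subst hx1y1
    have hqc : q.IsCycle := by
      rw [← Walk.map_isCycle_iff_of_injective (f := hinlHom) Sum.inl_injective, hq,
        isCycle_copy]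
      exact hc
    exact D.isTree.IsAcyclic q hqc
  -- assemble
  refine ⟨ι ⊕ Comp, T', ⟨⟨hT'conn, hT'acyclic⟩, bags', ?_, ?_, ?_⟩, ?_⟩
  · -- covers_vertex
    intro v
    by_cases hv : v ∈ S
    · obtain ⟨a, ha⟩ := D.covers_vertex ⟨v, hv⟩
      exact ⟨Sum.inl a, (hmem_inl a v).mpr ⟨hv, ha⟩⟩
    · refine ⟨Sum.inr ((G'.induce Sᶜ).connectedComponentMk ⟨v, hv⟩), ?_⟩
      exact (hmem_inr _ v).mpr (Or.inr ⟨hv, rfl⟩)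
  · -- covers_edge
    intro u w hadj
    by_cases hu : u ∈ S <;> by_cases hw : w ∈ S
    · obtain ⟨a, h1, h2⟩ := D.covers_edge (show (G'.induce S).Adj ⟨u, hu⟩ ⟨w, hw⟩ from hadj)
      exact ⟨Sum.inl a, (hmem_inl a u).mpr ⟨hu, h1⟩, (hmem_inl a w).mpr ⟨hw, h2⟩⟩
    · set C := (G'.induce Sᶜ).connectedComponentMk ⟨w, hw⟩ with hCdef
      have hub : (⟨u, hu⟩ : ↥S) ∈ D.bags (iC C) := by
        refine hiC C _ ?_
        rw [Set.Finite.mem_toFinset]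
        exact ⟨⟨w, hw⟩, rfl, hadj⟩
      exact ⟨Sum.inr C, (hmem_inr C u).mpr (Or.inl ⟨hu, hub⟩),
        (hmem_inr C w).mpr (Or.inr ⟨hw, rfl⟩)⟩
    · set C := (G'.induce Sᶜ).connectedComponentMk ⟨u, hu⟩ with hCdef
      have hwb : (⟨w, hw⟩ : ↥S) ∈ D.bags (iC C) := by
        refine hiC C _ ?_
        rw [Set.Finite.mem_toFinset]
        exact ⟨⟨u, hu⟩, rfl, hadj.symm⟩
      exact ⟨Sum.inr C, (hmem_inr C u).mpr (Or.inr ⟨hu, rfl⟩),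
        (hmem_inr C w).mpr (Or.inl ⟨hw, hwb⟩)⟩
    · set C := (G'.induce Sᶜ).connectedComponentMk ⟨u, hu⟩ with hCdef
      have hadj' : (G'.induce Sᶜ).Adj ⟨u, hu⟩ ⟨w, hw⟩ := hadj
      have hwC : ((G'.induce Sᶜ).connectedComponentMk ⟨w, hw⟩) = C :=
        (ConnectedComponent.sound hadj'.symm.reachable)
      exact ⟨Sum.inr C, (hmem_inr C u).mpr (Or.inr ⟨hu, rfl⟩),
        (hmem_inr C w).mpr (Or.inr ⟨hw, hwC⟩)⟩
  · -- bags_connected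
    intro v
    by_cases hv : v ∈ S
    · set B : Set ι := {a | (⟨v, hv⟩ : ↥S) ∈ D.bags a} with hBdef
      have hBconn : (T.induce B).Connected := D.bags_connected ⟨v, hv⟩
      set A : Set (ι ⊕ Comp) := {x | v ∈ bags' x} with hAdef
      have hA_inl : ∀ a : ι, Sum.inl a ∈ A ↔ a ∈ B := by
        intro a
        simp only [A, Set.mem_setOf_eq, hmem_inl, B]
        constructor
        · rintro ⟨hx, h⟩; exact h
        · intro h; exact ⟨hv, h⟩
      have hA_inr : ∀ C : Comp, Sum.inr C ∈ A ↔ iC C ∈ B := by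
        intro C
        simp only [A, Set.mem_setOf_eq, hmem_inr, B]
        constructor
        · rintro (⟨hx, h⟩ | ⟨hx, _⟩)
          · exact h
          · exact absurd hv hx
        · intro h; exact Or.inl ⟨hv, h⟩
      rw [connected_iff]
      constructor
      · -- preconnected
        let φ : T.induce B →g T'.induce A :=
          ⟨fun p => ⟨Sum.inl p.1, (hA_inl p.1).mpr p.2⟩, fun {p q} h => h⟩
        have base : ∀ (a b : ι) (ha : a ∈ B) (hb : b ∈ B),
            (T'.induce A).Reachable ⟨Sum.inl a, (hA_inl a).mpr ha⟩ ⟨Sum.inl b, (hA_inl b).mpr hb⟩ :=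
          fun a b ha hb => (hBconn ⟨a, ha⟩ ⟨b, hb⟩).map φ
        have step : ∀ (C : Comp) (hC : Sum.inr C ∈ A),
            (T'.induce A).Reachable ⟨Sum.inr C, hC⟩ ⟨Sum.inl (iC C), (hA_inl _).mpr ((hA_inr C).mp hC)⟩ := by
          intro C hC
          exact Adj.reachable (show T'.Adj (Sum.inr C) (Sum.inl (iC C)) from rfl)
        rintro ⟨(a|C), hx⟩ ⟨(b|E), hy⟩
        · exact base a b ((hA_inl a).mp hx) ((hA_inl b).mp hy)
        · exact (base a (iC E) ((hA_inl a).mp hx) ((hA_inr E).mp hy)).trans (step E hy).symm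
        · exact (step C hx).trans (base (iC C) b ((hA_inr C).mp hx) ((hA_inl b).mp hy))
        · exact ((step C hx).trans
            (base (iC C) (iC E) ((hA_inr C).mp hx) ((hA_inr E).mp hy))).trans (step E hy).symm
      · -- nonempty
        obtain ⟨⟨a, ha⟩⟩ := hBconn.nonempty
        exact ⟨⟨Sum.inl a, (hA_inl a).mpr ha⟩⟩
    · -- v ∉ S : a single bag contains v
      set C0 := (G'.induce Sᶜ).connectedComponentMk ⟨v, hv⟩ with hC0def
      have hA_eq : ∀ x : ι ⊕ Comp, v ∈ bags' x ↔ x = Sum.inr C0 := by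
        rintro (a|C)
        · simp only [hmem_inl]
          constructor
          · rintro ⟨hx, _⟩; exact absurd hx hv
          · intro h; exact absurd h (by simp)
        · rw [hmem_inr]
          constructor
          · rintro (⟨hx, _⟩ | ⟨hx, hmem⟩)
            · exact absurd hx hv
            · rw [ConnectedComponent.mem_supp_iff] at hmem
              rw [← hmem]
          · rintro h
            have hCC : C = C0 := by injection h
            exact Or.inr ⟨hv, by rw [ConnectedComponent.mem_supp_iff, hCC]⟩
      rw [connected_iff]
      constructor
      · rintro ⟨x, hx⟩ ⟨y, hy⟩
        have hx' : x = Sum.inr C0 := (hA_eq x).mp hx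
        have hy' : y = Sum.inr C0 := (hA_eq y).mp hy
        have : (⟨x, hx⟩ : {z // z ∈ {x | v ∈ bags' x}}) = ⟨y, hy⟩ :=
          Subtype.ext (hx'.trans hy'.symm)
        rw [this]
      · exact ⟨⟨Sum.inr C0, (hA_eq _).mpr rfl⟩⟩
  · -- card bound
    rintro (a|C)
    · calc ((D.bags a).image Subtype.val).card ≤ (D.bags a).card := Finset.card_image_le
        _ ≤ k + 1 := hDcard a
        _ ≤ k + c + 1 := by omega
    · calc ((D.bags (iC C)).image Subtype.val ∪ sF C).card
          ≤ ((D.bags (iC C)).image Subtype.val).card + (sF C).card := Finset.card_union_le _ _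
        _ ≤ (k + 1) + c := Nat.add_le_add (le_trans Finset.card_image_le (hDcard _)) (hsF_card C)
        _ = k + c + 1 := by omega
end

section
/- If G admits an H-deconstruction of width w and H admits a tree decomposition of width w_h, then G admits a tree decomposition of width at most w·(w_h+1) − 1; in particular, the treewidth of G is at most w times (treewidth of H plus 1). -/
/-- An `H`-deconstruction of `G`: bags indexed by vertices of `H` covering all vertices of `G`,
every edge of `G` contained in one bag or in the union of two bags indexed by adjacent
vertices of `H`, and each vertex's set of bags connected in `H`. -/
structure Deconstruction {V ι : Type} (G : SimpleGraph V) (H : SimpleGraph ι) where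
  B : ι → Finset V
  covers_vertex : ∀ v, ∃ h, v ∈ B h
  covers_edge : ∀ {u w}, G.Adj u w →
    (∃ h, u ∈ B h ∧ w ∈ B h) ∨ ∃ h h', H.Adj h h' ∧ u ∈ B h ∧ w ∈ B h'
  bags_connected : ∀ v, (H.induce {h | v ∈ B h}).Connected

/-- The deconstruction has width at most `w`: every bag, and every union of two bags
indexed by adjacent vertices of `H`, has size at most `w`. -/
def Deconstruction.WidthLE {V ι : Type} [DecidableEq V] {G : SimpleGraph V}
    {H : SimpleGraph ι} (D : Deconstruction G H) (w : ℕ) : Prop :=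
  (∀ h, (D.B h).card ≤ w) ∧ ∀ {h h'}, H.Adj h h' → (D.B h ∪ D.B h').card ≤ w

private lemma reach_of_subset {κ : Type} (T : SimpleGraph κ) {A B : Set κ} (hAB : A ⊆ B)
    {a b : κ} (ha : a ∈ A) (hb : b ∈ A)
    (h : (T.induce A).Reachable ⟨a, ha⟩ ⟨b, hb⟩) :
    (T.induce B).Reachable ⟨a, hAB ha⟩ ⟨b, hAB hb⟩ := by
  let f : T.induce A →g T.induce B := ⟨fun x => ⟨x.1, hAB x.2⟩, fun {p q} h => h⟩
  exact h.map f

/-- if `G` admits an `H`-deconstruction of width `w` and `H` admits a tree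
decomposition of width `w_h` (bags of size at most `w_h + 1`), then `G` admits a tree
decomposition (over the same tree) with bags of size at most `w * (w_h + 1)`, i.e. of
width at most `w * (w_h + 1) - 1`; in particular the treewidth of `G` is at most
`w * (w_h + 1) - 1`. -/
theorem treewidth_of_deconstruction {V ι κ : Type} [DecidableEq V]
    (G : SimpleGraph V) (H : SimpleGraph ι) (Dec : Deconstruction G H)
    (w : ℕ) (hw : Dec.WidthLE w)
    (T : SimpleGraph κ) (TD : TreeDecomp H T) (wh : ℕ)
    (hTD : ∀ s, (TD.bags s).card ≤ wh + 1) :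
    (∃ TD' : TreeDecomp G T, ∀ s, (TD'.bags s).card ≤ w * (wh + 1)) ∧
    TreewidthLE G (w * (wh + 1) - 1) := by
  classical
  set bags' : κ → Finset V := fun s => (TD.bags s).biUnion (fun h => Dec.B h) with hbags
  have hmem : ∀ (v : V) (s : κ), v ∈ bags' s ↔ ∃ h ∈ TD.bags s, v ∈ Dec.B h := by
    intro v s; simp [hbags, Finset.mem_biUnion]
  have hcard : ∀ s, (bags' s).card ≤ w * (wh + 1) := by
    intro s
    calc (bags' s).card ≤ ∑ h ∈ TD.bags s, (Dec.B h).card := Finset.card_biUnion_le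
      _ ≤ ∑ _h ∈ TD.bags s, w := Finset.sum_le_sum (fun h _ => hw.1 h)
      _ = (TD.bags s).card * w := by rw [Finset.sum_const, smul_eq_mul]
      _ ≤ (wh + 1) * w := Nat.mul_le_mul_right _ (hTD s)
      _ = w * (wh + 1) := Nat.mul_comm _ _
  have hconn : ∀ v, (T.induce {s | v ∈ bags' s}).Connected := by
    intro v
    set S : Set ι := {h | v ∈ Dec.B h} with hS
    set U : Set κ := {s | v ∈ bags' s} with hU
    have hUmem : ∀ s : κ, s ∈ U ↔ ∃ h ∈ TD.bags s, v ∈ Dec.B h := fun s => hmem v s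
    -- within one A_h we can move
    have step : ∀ (h : ι) (hvh : v ∈ Dec.B h), ∀ s s' (hs : h ∈ TD.bags s) (hs' : h ∈ TD.bags s'),
        (T.induce U).Reachable ⟨s, (hUmem s).2 ⟨h, hs, hvh⟩⟩
          ⟨s', (hUmem s').2 ⟨h, hs', hvh⟩⟩ := by
      intro h hvh s s' hs hs'
      have hsub : {i | h ∈ TD.bags i} ⊆ U := by
        intro x hx; exact (hUmem x).2 ⟨h, hx, hvh⟩
      have := (TD.bags_connected h).preconnected ⟨s, hs⟩ ⟨s', hs'⟩
      exact reach_of_subset T hsub hs hs' this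
    have key : ∀ (a b : ↥S) (_p : (H.induce S).Walk a b) (s s' : κ)
        (hs : a.1 ∈ TD.bags s) (hs' : b.1 ∈ TD.bags s'),
        (T.induce U).Reachable ⟨s, (hUmem s).2 ⟨a.1, hs, a.2⟩⟩
          ⟨s', (hUmem s').2 ⟨b.1, hs', b.2⟩⟩ := by
      intro a b p
      induction p with
      | @nil x =>
        intro s s' hs hs'
        exact step _ x.2 s s' hs hs'
      | @cons x y z hadj q ih =>
        intro s s' hs hs'
        have hHadj : H.Adj x.1 y.1 := hadj
        obtain ⟨s1, hxs1, hys1⟩ := TD.covers_edge hHadj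
        exact (step x.1 x.2 s s1 hs hxs1).trans (ih s1 s' hys1 hs')
    have hne : Nonempty ↥U := by
      obtain ⟨h, hvh⟩ := Dec.covers_vertex v
      obtain ⟨s, hhs⟩ := TD.covers_vertex h
      exact ⟨⟨s, (hUmem s).2 ⟨h, hhs, hvh⟩⟩⟩
    refine @SimpleGraph.Connected.mk _ _ ?_ hne
    rintro ⟨s, hs⟩ ⟨s', hs'⟩
    obtain ⟨h, hhs, hvh⟩ := (hUmem s).1 hs
    obtain ⟨h', hhs', hvh'⟩ := (hUmem s').1 hs'
    have : (H.induce S).Reachable ⟨h, hvh⟩ ⟨h', hvh'⟩ :=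
      (Dec.bags_connected v).preconnected _ _
    obtain ⟨p⟩ := this
    exact key ⟨h, hvh⟩ ⟨h', hvh'⟩ p s s' hhs hhs'
  let TD' : TreeDecomp G T := {
    isTree := TD.isTree
    bags := bags'
    covers_vertex := by
      intro v
      obtain ⟨h, hvh⟩ := Dec.covers_vertex v
      obtain ⟨s, hhs⟩ := TD.covers_vertex h
      exact ⟨s, (hmem v s).2 ⟨h, hhs, hvh⟩⟩
    covers_edge := by
      intro u x huw
      rcases Dec.covers_edge huw with ⟨h, hu, hx⟩ | ⟨h, h', hadj, hu, hx⟩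
      · obtain ⟨s, hhs⟩ := TD.covers_vertex h
        exact ⟨s, (hmem u s).2 ⟨h, hhs, hu⟩, (hmem x s).2 ⟨h, hhs, hx⟩⟩
      · obtain ⟨s, hhs, hhs'⟩ := TD.covers_edge hadj
        exact ⟨s, (hmem u s).2 ⟨h, hhs, hu⟩, (hmem x s).2 ⟨h', hhs', hx⟩⟩
    bags_connected := hconn }
  refine ⟨⟨TD', hcard⟩, κ, T, TD', fun s => le_trans (hcard s) (by omega)⟩
end

section
/- If G admits an H-deconstruction of width w and H admits a tree-depth decomposition of depth d, then the tree-depth of G is at most w·d. -/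
/-- if `G` admits an `H`-deconstruction of width `w` and `H` admits a
tree-depth decomposition of depth `d`, then the tree-depth of `G` is at most `w * d`. -/
theorem treedepth_of_deconstruction {V ι : Type} [Fintype V] [Fintype ι] [DecidableEq V]
    (G : SimpleGraph V) (H : SimpleGraph ι) (Dec : Deconstruction G H)
    (w : ℕ) (hw : Dec.WidthLE w)
    (D : TreeDepthDecomp H) (d : ℕ) (hD : D.DepthLE d) :
    ∃ D' : TreeDepthDecomp G, D'.DepthLE (w * d) := by
  classical
  -- For each vertex, the set of bags containing it has a D.le-minimum.
  have key : ∀ v : V, ∃ m, v ∈ Dec.B m ∧ ∀ h, v ∈ Dec.B h → D.le m h := by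
    intro v
    letI : PartialOrder ι :=
      { le := D.le, le_refl := D.le_refl,
        le_trans := fun _ _ _ => D.le_trans,
        le_antisymm := fun _ _ => D.le_antisymm }
    set S : Set ι := {h | v ∈ Dec.B h} with hSdef
    obtain ⟨h0, hh0⟩ := Dec.covers_vertex v
    have hS : (Set.toFinset S).Nonempty := ⟨h0, by simp [hSdef, hh0]⟩
    obtain ⟨m, hm, hmin⟩ : ∃ m ∈ Set.toFinset S, ∀ x ∈ Set.toFinset S, ¬ x < m := by
      obtain ⟨m, hm1, hm2⟩ := Finset.exists_minimal hS
      exact ⟨m, hm1, fun x hx hxm => (lt_iff_le_not_ge.1 hxm).2 (hm2 hx (lt_iff_le_not_ge.1 hxm).1)⟩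
    rw [Set.mem_toFinset] at hm
    refine ⟨m, hm, ?_⟩
    intro h hh
    have hreach : (H.induce S).Reachable ⟨m, hm⟩ ⟨h, hh⟩ :=
      (Dec.bags_connected v) ⟨m, hm⟩ ⟨h, hh⟩
    obtain ⟨p⟩ := hreach
    have step : ∀ (x y : S) (_ : (H.induce S).Walk x y), D.le m x.1 → D.le m y.1 := by
      intro x y p
      induction p with
      | nil => exact id
      | @cons a b c hadj p ih =>
        intro hmx
        apply ih
        have hab : H.Adj a.1 b.1 := hadj
        rcases D.adj_comparable hab with hd | hd
        · exact D.le_trans hmx hd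
        · rcases D.ancestors_chain (c := a.1) hmx hd with h1 | h1
          · exact h1
          · have hb : (b : ι) ∈ Set.toFinset S := Set.mem_toFinset.2 b.2
            have heq : (b : ι) = m := by
              by_contra hne
              exact hmin b hb ⟨h1, fun hmb => hne (D.le_antisymm h1 hmb)⟩
            rw [heq]
            exact D.le_refl m
    exact step _ _ p (D.le_refl m)
  choose f hf1 hf2 using key
  letI : LinearOrder V :=
    LinearOrder.lift' (Fintype.equivFin V) (Fintype.equivFin V).injective
  -- the order on V
  set le' : V → V → Prop :=
    fun u v => (D.le (f u) (f v) ∧ f u ≠ f v) ∨ (f u = f v ∧ u ≤ v) with hle'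
  have refl' : ∀ a, le' a a := fun a => Or.inr ⟨rfl, le_refl a⟩
  have trans' : ∀ {a b c}, le' a b → le' b c → le' a c := by
    intro a b c hab hbc
    rcases hab with ⟨h1, h2⟩ | ⟨h1, h2⟩ <;> rcases hbc with ⟨h3, h4⟩ | ⟨h3, h4⟩
    · refine Or.inl ⟨D.le_trans h1 h3, fun he => ?_⟩
      exact h2 (D.le_antisymm h1 (he ▸ h3))
    · exact Or.inl ⟨h3 ▸ h1, h3 ▸ h2⟩
    · exact Or.inl ⟨h1 ▸ h3, fun he => h4 (h1.symm.trans he)⟩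
    · exact Or.inr ⟨h1.trans h3, h2.trans h4⟩
  have antisymm' : ∀ {a b}, le' a b → le' b a → a = b := by
    intro a b hab hba
    rcases hab with ⟨h1, h2⟩ | ⟨h1, h2⟩ <;> rcases hba with ⟨h3, h4⟩ | ⟨h3, h4⟩
    · exact absurd (D.le_antisymm h1 h3) h2
    · exact absurd h3.symm h2
    · exact absurd h1 (fun e => h4 e.symm)
    · exact le_antisymm h2 h4
  have comp_of : ∀ {u v}, (D.le (f u) (f v) ∨ D.le (f v) (f u)) → le' u v ∨ le' v u := by
    intro u v hc
    by_cases he : f u = f v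
    · rcases le_total u v with h | h
      · exact Or.inl (Or.inr ⟨he, h⟩)
      · exact Or.inr (Or.inr ⟨he.symm, h⟩)
    · rcases hc with h | h
      · exact Or.inl (Or.inl ⟨h, he⟩)
      · exact Or.inr (Or.inl ⟨h, fun e => he e.symm⟩)
  refine ⟨⟨le', refl', @trans', @antisymm', ?_, ?_⟩, ?_⟩
  · -- ancestors chain
    intro a b c hac hbc
    have hfa : D.le (f a) (f c) := by
      rcases hac with ⟨h1, _⟩ | ⟨h1, _⟩
      · exact h1
      · exact h1 ▸ D.le_refl (f a)
    have hfb : D.le (f b) (f c) := by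
      rcases hbc with ⟨h1, _⟩ | ⟨h1, _⟩
      · exact h1
      · exact h1 ▸ D.le_refl (f b)
    exact comp_of (D.ancestors_chain hfa hfb)
  · -- adjacency comparable
    intro u v huv
    rcases Dec.covers_edge huv with ⟨h, hu, hv⟩ | ⟨h, h', hadj, hu, hv⟩
    · exact comp_of (D.ancestors_chain (hf2 u h hu) (hf2 v h hv))
    · rcases D.adj_comparable hadj with hhd | hhd
      · exact comp_of (D.ancestors_chain (D.le_trans (hf2 u h hu) hhd) (hf2 v h' hv))
      · exact comp_of (D.ancestors_chain (hf2 u h hu) (D.le_trans (hf2 v h' hv) hhd))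
  · -- depth bound
    intro s hs
    have himg : ∀ a ∈ s.image f, ∀ b ∈ s.image f, D.le a b ∨ D.le b a := by
      intro a ha b hb
      obtain ⟨u, hu, rfl⟩ := Finset.mem_image.1 ha
      obtain ⟨v, hv, rfl⟩ := Finset.mem_image.1 hb
      rcases hs u hu v hv with h | h
      · rcases h with ⟨h1, _⟩ | ⟨h1, _⟩
        · exact Or.inl h1
        · exact Or.inl (h1 ▸ D.le_refl _)
      · rcases h with ⟨h1, _⟩ | ⟨h1, _⟩
        · exact Or.inr h1
        · exact Or.inr (h1 ▸ D.le_refl _)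
    have h1 : (s.image f).card ≤ d := hD _ himg
    have h2 : s.card ≤ w * (s.image f).card := by
      apply Finset.card_le_mul_card_image
      intro a _
      have hsub : (s.filter fun x => f x = a) ⊆ Dec.B a := by
        intro x hx
        obtain ⟨_, hfx⟩ := Finset.mem_filter.1 hx
        exact hfx ▸ hf1 x
      exact le_trans (Finset.card_le_card hsub) (hw.1 a)
    calc s.card ≤ w * (s.image f).card := h2
      _ ≤ w * d := Nat.mul_le_mul_left w h1
end

section
/- For every n ∈ ℕ, there is a 3-CNF formula with named variables x_0,…,x_{n−1} (input), y_0,…,y_{⌈lg n⌉−1} (index), and z (output), with O(n) variables in total, such that an assignment of the named variables extends to a satisfying assignment if and only if z equals x_{ȳ}, where ȳ is the number encoded in binary by the index variables (and z = 0 is required when ȳ ≥ n); moreover the primal graph of the formula has tree-depth O(log n). -/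
/-- A CNF formula over variables `α` is a finite set of clauses, each clause a finite set
of literals (a variable together with a polarity). `σ` satisfies the formula if every
clause contains a literal evaluating to true. -/
def SatisfiesCNF {α : Type} (F : Finset (Finset (α × Bool))) (σ : α → Bool) : Prop :=
  ∀ C ∈ F, ∃ l ∈ C, σ l.1 = l.2

/-- The primal (Gaifman) graph of a CNF formula: variables are adjacent when they occur
together in some clause. -/
def cnfPrimal {α : Type} (F : Finset (Finset (α × Bool))) : SimpleGraph α :=
  SimpleGraph.fromRel fun x y => ∃ C ∈ F, (∃ b, (x, b) ∈ C) ∧ ∃ b, (y, b) ∈ C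


namespace RAG

lemma sum_div_pow (t : ℕ) : ∀ (β : ℕ → Bool) (LL : ℕ),
    (∑ j ∈ Finset.range LL, if β j then 2^j else 0) / 2^t
      = ∑ j ∈ Finset.range (LL - t), if β (j + t) then 2^j else 0 := by
  induction t with
  | zero => intro β LL; simp
  | succ t ih =>
    intro β LL
    cases LL with
    | zero => simp
    | succ L =>
      have h2 : (∑ j ∈ Finset.range (L+1), if β j then 2^j else 0) / 2
          = ∑ j ∈ Finset.range L, if β (j+1) then 2^j else 0 := by
        rw [Finset.sum_range_succ' (fun j => if β j then 2^j else 0) L]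
        have h3 : (∑ j ∈ Finset.range L, if β (j+1) then 2^(j+1) else 0)
            = 2 * ∑ j ∈ Finset.range L, if β (j+1) then 2^j else 0 := by
          rw [Finset.mul_sum]
          refine Finset.sum_congr rfl fun j _ => ?_
          split <;> ring
        rw [h3, Nat.mul_add_div (by norm_num)]
        have : (if β 0 then 2^0 else 0) / 2 = 0 := by split <;> simp
        omega
      have hp : (2:ℕ)^(t+1) = 2 * 2^t := by ring
      rw [hp, ← Nat.div_div_eq_div_mul, h2, ih (fun j => β (j+1)) L]
      have : L - t = L + 1 - (t + 1) := by omega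
      rw [this]
      refine Finset.sum_congr rfl fun j _ => ?_
      have hjt : j + t + 1 = j + (t + 1) := by omega
      rw [hjt]

lemma sum_bit (β : ℕ → Bool) (LL t : ℕ) (ht : t < LL) :
    (∑ j ∈ Finset.range LL, if β j then 2^j else 0) / 2^t % 2
      = if β t then 1 else 0 := by
  rw [sum_div_pow]
  have hL : LL - t = (LL - t - 1) + 1 := by omega
  rw [hL, Finset.sum_range_succ' (fun j => if β (j + t) then 2^j else 0)]
  have h3 : (∑ j ∈ Finset.range (LL - t - 1), if β (j+1+t) then 2^(j+1) else 0)
      = 2 * ∑ j ∈ Finset.range (LL - t - 1), if β (j+1+t) then 2^j else 0 := by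
    rw [Finset.mul_sum]
    refine Finset.sum_congr rfl fun j _ => ?_
    split <;> ring
  rw [h3, Nat.mul_add_mod]
  simp only [Nat.zero_add]
  split <;> simp

lemma sum_lt_pow (β : ℕ → Bool) (LL : ℕ) :
    (∑ j ∈ Finset.range LL, if β j then 2^j else 0) < 2^LL := by
  induction LL with
  | zero => simp
  | succ L ih =>
    rw [Finset.sum_range_succ]
    have h1 : (if β L then 2^L else 0) ≤ 2^L := by split <;> simp
    have : (2:ℕ)^(L+1) = 2^L + 2^L := by ring
    omega


/-! ### The multiplexer-tree gadget -/

def Lg (n : ℕ) : ℕ := Nat.clog 2 n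
def NN (n : ℕ) : ℕ := n + Lg n + 2 ^ (Lg n + 1)

lemma pow_pos2 (m : ℕ) : 0 < (2:ℕ)^m := pow_pos (by norm_num) m

def xV (n : ℕ) (i : Fin n) : Fin (NN n) := ⟨i, by have h1 := i.2; have h2 := pow_pos2 (Lg n + 1); unfold NN; omega⟩
def yV (n : ℕ) (j : ℕ) : Fin (NN n) :=
  if h : j < Lg n then ⟨n + j, by unfold NN; have := pow_pos2 (Lg n + 1); omega⟩
  else ⟨n + Lg n, by unfold NN; have := pow_pos2 (Lg n + 1); omega⟩
def nV (n : ℕ) (k : ℕ) : Fin (NN n) :=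
  ⟨n + Lg n + k % 2 ^ (Lg n + 1), by
    unfold NN; have := Nat.mod_lt k (pow_pos2 (Lg n + 1)); omega⟩

lemma nV_val (n k : ℕ) (hk : k < 2 ^ (Lg n + 1)) : (nV n k).val = n + Lg n + k := by
  simp [nV, Nat.mod_eq_of_lt hk]

def muxC (n k : ℕ) : Finset (Finset (Fin (NN n) × Bool)) :=
  { {(yV n (Lg n - 1 - Nat.log 2 k), false), (nV n (2*k+1), false), (nV n k, true)},
    {(yV n (Lg n - 1 - Nat.log 2 k), false), (nV n (2*k+1), true), (nV n k, false)},
    {(yV n (Lg n - 1 - Nat.log 2 k), true), (nV n (2*k), false), (nV n k, true)},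
    {(yV n (Lg n - 1 - Nat.log 2 k), true), (nV n (2*k), true), (nV n k, false)} }

def leafC (n i : ℕ) : Finset (Finset (Fin (NN n) × Bool)) :=
  if h : i < n then
    { {(nV n (2^(Lg n) + i), false), (xV n ⟨i, h⟩, true)},
      {(nV n (2^(Lg n) + i), true), (xV n ⟨i, h⟩, false)} }
  else { {(nV n (2^(Lg n) + i), false)} }

def FF (n : ℕ) : Finset (Finset (Fin (NN n) × Bool)) :=
  (Finset.Ico 1 (2^(Lg n))).biUnion (muxC n) ∪ (Finset.range (2^(Lg n))).biUnion (leafC n)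

/-! ### Intended values -/

def leafVal (n : ℕ) (a : Fin n → Bool) (i : ℕ) : Bool :=
  if h : i < n then a ⟨i, h⟩ else false

def nodeVal (n : ℕ) (a : Fin n → Bool) (m k : ℕ) : Bool :=
  leafVal n a (k * 2 ^ (Lg n - Nat.log 2 k) + m % 2 ^ (Lg n - Nat.log 2 k) - 2 ^ (Lg n))

def asg (n : ℕ) (a : Fin n → Bool) (b : Fin (Lg n) → Bool) (m : ℕ) (v : Fin (NN n)) : Bool :=
  if h : v.val < n then a ⟨v.val, h⟩
  else if h2 : v.val < n + Lg n then b ⟨v.val - n, by omega⟩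
  else nodeVal n a m (v.val - n - Lg n)

lemma asg_x (n a b m) (i : Fin n) : asg n a b m (xV n i) = a i := by
  simp [asg, xV]
lemma asg_y (n a b m) (j : ℕ) (hj : j < Lg n) : asg n a b m (yV n j) = b ⟨j, hj⟩ := by
  simp only [asg, yV, dif_pos hj]
  rw [dif_neg (by omega), dif_pos (by omega)]
  congr 1
  exact Fin.ext (by simp)
lemma asg_n (n a b m) (k : ℕ) (hk : k < 2 ^ (Lg n + 1)) :
    asg n a b m (nV n k) = nodeVal n a m k := by
  have hv := nV_val n k hk
  simp only [asg, hv]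
  rw [dif_neg (by omega), dif_neg (by omega)]
  congr 1
  omega


/-! ### Value lemmas -/

section Values
variable (n : ℕ) (a : Fin n → Bool) (β : ℕ → Bool)

def mOf : ℕ := ∑ j ∈ Finset.range (Lg n), if β j then 2^j else 0

lemma mOf_lt : mOf n β < 2 ^ (Lg n) := sum_lt_pow β (Lg n)

lemma mux_step (k : ℕ) (hk1 : 1 ≤ k) (hk2 : k < 2 ^ (Lg n)) :
    nodeVal n a (mOf n β) k =
      if β (Lg n - 1 - Nat.log 2 k) then nodeVal n a (mOf n β) (2*k+1)
      else nodeVal n a (mOf n β) (2*k) := by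
  set L := Lg n with hL
  set j := Nat.log 2 k with hj
  set m := mOf n β with hm
  have hjL : j < L := Nat.log_lt_of_lt_pow (by omega) hk2
  have hklow : (2:ℕ)^j ≤ k := Nat.pow_log_le_self 2 (by omega)
  have hkhigh : k < 2^(j+1) := Nat.lt_pow_succ_log_self (by norm_num) k
  have hlog2k : Nat.log 2 (2*k) = j + 1 := by
    rw [mul_comm]; exact Nat.log_mul_base (by norm_num) (by omega)
  have hlog2k1 : Nat.log 2 (2*k+1) = j + 1 := by
    refine Nat.log_eq_of_pow_le_of_lt_pow ?_ ?_
    · have : (2:ℕ)^(j+1) = 2 * 2^j := by ring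
      omega
    · have : (2:ℕ)^(j+1+1) = 2 * 2^(j+1) := by ring
      omega
  set t := L - 1 - j with ht
  have hLj : L - j = t + 1 := by omega
  have hLj1 : L - (j+1) = t := by omega
  have hmm : m % 2^(t+1) = m % 2^t + 2^t * (if β t then 1 else 0) := by
    have h2 : (2:ℕ)^(t+1) = 2^t * 2 := by ring
    rw [h2, Nat.mod_mul, hm, mOf, sum_bit β L t (by omega)]
  unfold nodeVal
  rw [hlog2k, hlog2k1, hLj, hLj1, hmm]
  cases hβ : β t with
  | true =>
    rw [if_pos rfl]
    congr 1
    have h1 : k * 2^(t+1) + (m % 2^t + 2^t * 1) = (2*k+1) * 2^t + m % 2^t := by ring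
    omega
  | false =>
    rw [if_neg (by simp)]
    congr 1
    have h1 : k * 2^(t+1) + (m % 2^t + 2^t * 0) = (2*k) * 2^t + m % 2^t := by ring
    omega

lemma node_leaf (i : ℕ) (hi : i < 2 ^ (Lg n)) (m : ℕ) :
    nodeVal n a m (2 ^ (Lg n) + i) = leafVal n a i := by
  have hlog : Nat.log 2 (2 ^ (Lg n) + i) = Lg n := by
    refine Nat.log_eq_of_pow_le_of_lt_pow (by omega) ?_
    have : (2:ℕ)^(Lg n + 1) = 2 * 2^(Lg n) := by ring
    omega
  unfold nodeVal
  rw [hlog, Nat.sub_self, pow_zero, mul_one, Nat.mod_one, Nat.add_zero]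
  congr 1
  omega

lemma node_root : nodeVal n a (mOf n β) 1 = leafVal n a (mOf n β) := by
  unfold nodeVal
  rw [Nat.log_one_right, Nat.sub_zero, one_mul]
  have h4 := Nat.mod_eq_of_lt (mOf_lt n β)
  rw [h4]
  congr 1
  omega

end Values


/-! ### Clause satisfaction -/

section Clauses
variable {n : ℕ} (σ : Fin (NN n) → Bool)

lemma sat_muxC (k : ℕ)
    (hw : σ (nV n k) = if σ (yV n (Lg n - 1 - Nat.log 2 k)) then σ (nV n (2*k+1))
      else σ (nV n (2*k))) :
    ∀ C ∈ muxC n k, ∃ p ∈ C, σ p.1 = p.2 := by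
  intro C hC
  simp only [muxC, Finset.mem_insert, Finset.mem_singleton] at hC
  rcases hC with rfl | rfl | rfl | rfl <;>
  · simp only [Finset.mem_insert, Finset.mem_singleton, exists_eq_or_imp, exists_eq_left]
    cases hs : σ (yV n (Lg n - 1 - Nat.log 2 k)) <;>
      cases hh : σ (nV n (2*k+1)) <;> cases hl : σ (nV n (2*k)) <;> simp_all

lemma forced_muxC (k : ℕ) (hsat : ∀ C ∈ muxC n k, ∃ p ∈ C, σ p.1 = p.2) :
    σ (nV n k) = if σ (yV n (Lg n - 1 - Nat.log 2 k)) then σ (nV n (2*k+1))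
      else σ (nV n (2*k)) := by
  have h1 := hsat {(yV n (Lg n - 1 - Nat.log 2 k), false), (nV n (2*k+1), false), (nV n k, true)}
    (by simp [muxC])
  have h2 := hsat {(yV n (Lg n - 1 - Nat.log 2 k), false), (nV n (2*k+1), true), (nV n k, false)}
    (by simp [muxC])
  have h3 := hsat {(yV n (Lg n - 1 - Nat.log 2 k), true), (nV n (2*k), false), (nV n k, true)}
    (by simp [muxC])
  have h4 := hsat {(yV n (Lg n - 1 - Nat.log 2 k), true), (nV n (2*k), true), (nV n k, false)}
    (by simp [muxC])
  simp only [Finset.mem_insert, Finset.mem_singleton, exists_eq_or_imp, exists_eq_left]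
    at h1 h2 h3 h4
  cases hs : σ (yV n (Lg n - 1 - Nat.log 2 k)) <;>
    cases hh : σ (nV n (2*k+1)) <;> cases hl : σ (nV n (2*k)) <;> simp_all

lemma sat_leafC (i : ℕ)
    (hw : σ (nV n (2^(Lg n) + i)) = leafVal n (fun j => σ (xV n j)) i) :
    ∀ C ∈ leafC n i, ∃ p ∈ C, σ p.1 = p.2 := by
  intro C hC
  unfold leafC at hC
  split at hC
  · rename_i h
    simp only [Finset.mem_insert, Finset.mem_singleton] at hC
    rw [leafVal, dif_pos h] at hw
    rcases hC with rfl | rfl <;>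
    · simp only [Finset.mem_insert, Finset.mem_singleton, exists_eq_or_imp, exists_eq_left]
      cases hx : σ (xV n ⟨i, h⟩) <;> simp_all
  · rename_i h
    simp only [Finset.mem_singleton] at hC
    rw [leafVal, dif_neg h] at hw
    subst hC
    exact ⟨_, Finset.mem_singleton_self _, hw⟩

lemma forced_leafC (i : ℕ) (hsat : ∀ C ∈ leafC n i, ∃ p ∈ C, σ p.1 = p.2) :
    σ (nV n (2^(Lg n) + i)) = leafVal n (fun j => σ (xV n j)) i := by
  unfold leafC at hsat
  by_cases h : i < n
  · rw [leafVal, dif_pos h]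
    rw [dif_pos h] at hsat
    have h1 := hsat _ (show _ ∈ _ by exact Finset.mem_insert_self _ _)
    have h2 := hsat {(nV n (2^(Lg n) + i), true), (xV n ⟨i, h⟩, false)}
      (by simp)
    simp only [Finset.mem_insert, Finset.mem_singleton, exists_eq_or_imp, exists_eq_left]
      at h1 h2
    cases hx : σ (xV n ⟨i, h⟩) <;> simp_all
  · rw [leafVal, dif_neg h]
    rw [dif_neg h] at hsat
    have h1 := hsat _ (Finset.mem_singleton_self _)
    simp only [Finset.mem_singleton, exists_eq_left] at h1
    exact h1

end Clauses


/-! ### Main semantics -/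

def bext (n : ℕ) (b : Fin (Lg n) → Bool) : ℕ → Bool :=
  fun j => if h : j < Lg n then b ⟨j, h⟩ else false

section Main
variable (n : ℕ) (a : Fin n → Bool) (b : Fin (Lg n) → Bool)

lemma pow_succ2 (m : ℕ) : (2:ℕ)^(m+1) = 2 * 2^m := by ring

lemma extends_sat : SatisfiesCNF (FF n) (asg n a b (mOf n (bext n b))) := by
  set β := bext n b with hβ
  set m := mOf n β with hm
  set σ := asg n a b m with hσ
  intro C hC
  rcases Finset.mem_union.1 hC with hC | hC
  · obtain ⟨k, hk, hCk⟩ := Finset.mem_biUnion.1 hC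
    rw [Finset.mem_Ico] at hk
    have hL1 : 1 ≤ Lg n := by
      by_contra hcon
      have : Lg n = 0 := by omega
      rw [this] at hk; simp at hk; omega
    have hp := pow_succ2 (Lg n)
    set t := Lg n - 1 - Nat.log 2 k with ht
    have htL : t < Lg n := by omega
    refine sat_muxC σ k ?_ C hCk
    rw [hσ, asg_n n a b m k (by omega), asg_n n a b m (2*k+1) (by omega),
      asg_n n a b m (2*k) (by omega), asg_y n a b m t htL]
    have hbt : b ⟨t, htL⟩ = β t := by rw [hβ]; unfold bext; rw [dif_pos htL]
    rw [hbt, hm]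
    exact mux_step n a β k hk.1 hk.2
  · obtain ⟨i, hi, hCi⟩ := Finset.mem_biUnion.1 hC
    rw [Finset.mem_range] at hi
    have hp := pow_succ2 (Lg n)
    refine sat_leafC σ i ?_ C hCi
    rw [hσ, asg_n n a b m (2^(Lg n) + i) (by omega), node_leaf n a i hi]
    have hfa : (fun j => asg n a b m (xV n j)) = a := funext (asg_x n a b m)
    rw [hfa]

lemma forced_all (σ : Fin (NN n) → Bool) (hsat : SatisfiesCNF (FF n) σ)
    (hx : ∀ i, σ (xV n i) = a i) (hy : ∀ j : Fin (Lg n), σ (yV n j.val) = b j) :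
    ∀ d, d ≤ Lg n → ∀ k, 1 ≤ k → Nat.log 2 k = Lg n - d →
      σ (nV n k) = nodeVal n a (mOf n (bext n b)) k := by
  set β := bext n b with hβ
  set m := mOf n β with hm
  intro d
  induction d with
  | zero =>
    intro _ k hk1 hklog
    rw [Nat.sub_zero] at hklog
    have hlow : 2^(Lg n) ≤ k := hklog ▸ Nat.pow_log_le_self 2 (by omega)
    have hhigh : k < 2^(Lg n + 1) := by
      have := Nat.lt_pow_succ_log_self (b := 2) (by norm_num) k
      rwa [hklog] at this
    set i := k - 2^(Lg n) with hi
    have hik : k = 2^(Lg n) + i := by omega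
    have hi2 : i < 2^(Lg n) := by have := pow_succ2 (Lg n); omega
    have hmem : ∀ C ∈ leafC n i, ∃ p ∈ C, σ p.1 = p.2 := by
      intro C hCk
      exact hsat C (Finset.mem_union_right _
        (Finset.mem_biUnion.2 ⟨i, Finset.mem_range.2 hi2, hCk⟩))
    rw [hik]
    rw [forced_leafC σ i hmem, node_leaf n a i hi2]
    have hfa : (fun j => σ (xV n j)) = a := funext hx
    rw [hfa]
  | succ d ih =>
    intro hd k hk1 hklog
    have hL1 : 1 ≤ Lg n := by omega
    have hklow : (2:ℕ)^(Lg n - (d+1)) ≤ k := hklog ▸ Nat.pow_log_le_self 2 (by omega)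
    have hkhigh : k < 2^(Lg n - d) := by
      have h1 := Nat.lt_pow_succ_log_self (b := 2) (by norm_num) k
      rw [hklog, Nat.succ_eq_add_one] at h1
      have h2 : Lg n - (d+1) + 1 = Lg n - d := by omega
      rwa [h2] at h1
    have hk2L : k < 2^(Lg n) := lt_of_lt_of_le hkhigh (Nat.pow_le_pow_right (by norm_num) (by omega))
    have hmem : ∀ C ∈ muxC n k, ∃ p ∈ C, σ p.1 = p.2 := by
      intro C hCk
      exact hsat C (Finset.mem_union_left _
        (Finset.mem_biUnion.2 ⟨k, Finset.mem_Ico.2 ⟨hk1, hk2L⟩, hCk⟩))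
    have hrec := forced_muxC σ k hmem
    set t := Lg n - 1 - Nat.log 2 k with ht
    have htd : t = d := by omega
    have htL : t < Lg n := by omega
    have hyy : σ (yV n t) = β t := by
      have := hy ⟨t, htL⟩
      rw [this, hβ]; unfold bext; rw [dif_pos htL]
    -- logs of children
    have hj := hklog
    have hlog2k : Nat.log 2 (2*k) = Lg n - d := by
      rw [mul_comm]
      rw [Nat.log_mul_base (by norm_num) (by omega), hklog]
      omega
    have hlog2k1 : Nat.log 2 (2*k+1) = Lg n - d := by
      refine Nat.log_eq_of_pow_le_of_lt_pow ?_ ?_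
      · have h2 : Lg n - d = (Lg n - (d+1)) + 1 := by omega
        rw [h2, pow_succ2]
        omega
      · rw [pow_succ2]
        omega
    have h2k : σ (nV n (2*k)) = nodeVal n a m (2*k) :=
      ih (by omega) (2*k) (by omega) hlog2k
    have h2k1 : σ (nV n (2*k+1)) = nodeVal n a m (2*k+1) :=
      ih (by omega) (2*k+1) (by omega) hlog2k1
    rw [hrec, hyy, h2k, h2k1, hm]
    exact (mux_step n a β k hk1 hk2L).symm

end Main


/-! ### Heap-ancestor relation -/

def anc (x y : ℕ) : Prop := ∃ t, y / 2^t = x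

lemma anc_refl (x : ℕ) : anc x x := ⟨0, by simp⟩

lemma anc_le {x y : ℕ} : anc x y → x ≤ y := by
  rintro ⟨t, rfl⟩; exact Nat.div_le_self _ _

lemma anc_trans {x y z : ℕ} : anc x y → anc y z → anc x z := by
  rintro ⟨t, ht⟩ ⟨s, hs⟩
  exact ⟨s + t, by rw [pow_add, ← Nat.div_div_eq_div_mul, hs, ht]⟩

lemma anc_antisymm {x y : ℕ} : anc x y → anc y x → x = y := by
  intro h1 h2
  exact le_antisymm (anc_le h1) (anc_le h2)

lemma anc_total {x y z : ℕ} : anc x z → anc y z → anc x y ∨ anc y x := by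
  rintro ⟨t, ht⟩ ⟨s, hs⟩
  rcases le_total t s with h | h
  · right
    refine ⟨s - t, ?_⟩
    rw [← ht, Nat.div_div_eq_div_mul, ← pow_add, ← hs]
    congr 2
    omega
  · left
    refine ⟨t - s, ?_⟩
    rw [← hs, Nat.div_div_eq_div_mul, ← pow_add, ← ht]
    congr 2
    omega

lemma anc_two_mul {x y : ℕ} (h : anc x y) (hne : x ≠ y) : 2 * x ≤ y := by
  obtain ⟨t, ht⟩ := h
  have ht1 : 1 ≤ t := by
    by_contra hcon
    have : t = 0 := by omega
    rw [this] at ht; simp at ht; omega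
  have h2 : y / 2^t ≤ y / 2 := Nat.div_le_div_left (by
    calc (2:ℕ) = 2^1 := (pow_one 2).symm
    _ ≤ 2^t := Nat.pow_le_pow_right (by norm_num) ht1) (by norm_num)
  rw [ht] at h2
  omega

lemma anc_log {x y : ℕ} (h : anc x y) (hne : x ≠ y) (hx : x ≠ 0) :
    Nat.log 2 x < Nat.log 2 y := by
  have h2 := anc_two_mul h hne
  have h3 : Nat.log 2 (x * 2) = Nat.log 2 x + 1 := Nat.log_mul_base (by norm_num) hx
  have h4 : Nat.log 2 (x * 2) ≤ Nat.log 2 y := Nat.log_mono_right (by omega)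
  omega

/-! ### The decomposition order -/

def dle (n : ℕ) (u v : Fin (NN n)) : Prop :=
  if u.val < n then u = v
  else if u.val < n + Lg n then ((n ≤ v.val ∧ v.val < n + Lg n) → v.val ≤ u.val)
  else if v.val < n then anc (u.val - (n + Lg n)) (2^(Lg n) + v.val)
  else if v.val < n + Lg n then False
  else anc (u.val - (n + Lg n)) (v.val - (n + Lg n))

section Dle
variable {n : ℕ}

lemma dle_refl (u : Fin (NN n)) : dle n u u := by
  unfold dle
  split_ifs <;> first | rfl | omega | exact fun _ => le_refl _ | exact anc_refl _

lemma dle_trans {u v w : Fin (NN n)} (h1 : dle n u v) (h2 : dle n v w) : dle n u w := by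
  unfold dle at h1 h2 ⊢
  by_cases hu : u.val < n
  · rw [if_pos hu] at h1 ⊢
    subst h1
    rw [if_pos hu] at h2
    exact h2
  · rw [if_neg hu] at h1 ⊢
    by_cases hu2 : u.val < n + Lg n
    · rw [if_pos hu2] at h1 ⊢
      intro hw
      by_cases hv : v.val < n
      · rw [if_pos hv] at h2
        have : v.val = w.val := by rw [h2]
        omega
      · rw [if_neg hv] at h2
        by_cases hv2 : v.val < n + Lg n
        · rw [if_pos hv2] at h2
          exact le_trans (h2 hw) (h1 ⟨by omega, hv2⟩)
        · rw [if_neg hv2, if_neg (by omega : ¬ w.val < n), if_pos hw.2] at h2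
          exact h2.elim
    · rw [if_neg hu2] at h1 ⊢
      by_cases hv : v.val < n
      · rw [if_pos hv] at h1 h2
        have hw : w.val < n := by rw [← h2]; exact hv
        rw [if_pos hw, ← h2]
        exact h1
      · rw [if_neg hv] at h1 h2
        by_cases hv2 : v.val < n + Lg n
        · rw [if_pos hv2] at h1
          exact h1.elim
        · rw [if_neg hv2] at h1 h2
          by_cases hw : w.val < n
          · rw [if_pos hw] at h2 ⊢
            exact anc_trans h1 h2
          · rw [if_neg hw] at h2 ⊢
            by_cases hw2 : w.val < n + Lg n
            · rw [if_pos hw2] at h2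
              exact h2.elim
            · rw [if_neg hw2] at h2 ⊢
              exact anc_trans h1 h2

lemma dle_antisymm {u v : Fin (NN n)} (h1 : dle n u v) (h2 : dle n v u) : u = v := by
  unfold dle at h1 h2
  by_cases hu : u.val < n
  · rwa [if_pos hu] at h1
  · rw [if_neg hu] at h1
    by_cases hv : v.val < n
    · rw [if_pos hv] at h2
      exact h2.symm
    · rw [if_neg hv] at h2
      by_cases hu2 : u.val < n + Lg n
      · rw [if_pos hu2] at h1
        by_cases hv2 : v.val < n + Lg n
        · rw [if_pos hv2] at h2
          have e1 := h1 ⟨by omega, hv2⟩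
          have e2 := h2 ⟨by omega, hu2⟩
          exact Fin.ext (by omega)
        · rw [if_neg hv2, if_neg (by omega : ¬ u.val < n), if_pos hu2] at h2
          exact h2.elim
      · rw [if_neg hu2] at h1
        by_cases hv2 : v.val < n + Lg n
        · rw [if_neg (by omega : ¬ v.val < n), if_pos hv2] at h1
          exact h1.elim
        · rw [if_neg (by omega : ¬ v.val < n), if_neg hv2] at h1
          rw [if_neg hv2, if_neg hu, if_neg hu2] at h2
          have := anc_antisymm h1 h2
          exact Fin.ext (by omega)

lemma dle_chain {a b c : Fin (NN n)} (h1 : dle n a c) (h2 : dle n b c) :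
    dle n a b ∨ dle n b a := by
  by_cases ha : a.val < n
  · unfold dle at h1
    rw [if_pos ha] at h1
    subst h1
    exact Or.inr h2
  · by_cases hb : b.val < n
    · unfold dle at h2
      rw [if_pos hb] at h2
      subst h2
      exact Or.inl h1
    · by_cases ha2 : a.val < n + Lg n
      · by_cases hb2 : b.val < n + Lg n
        · rcases le_total b.val a.val with h | h
          · exact Or.inl (by unfold dle; rw [if_neg ha, if_pos ha2]; exact fun _ => h)
          · exact Or.inr (by unfold dle; rw [if_neg hb, if_pos hb2]; exact fun _ => h)
        · exact Or.inl (by unfold dle; rw [if_neg ha, if_pos ha2]; intro hc; omega)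
      · by_cases hb2 : b.val < n + Lg n
        · exact Or.inr (by unfold dle; rw [if_neg hb, if_pos hb2]; intro hc; omega)
        · -- both nodes
          unfold dle at h1 h2 ⊢
          simp only [if_neg ha, if_neg ha2, if_neg hb, if_neg hb2] at h1 h2 ⊢
          by_cases hc : c.val < n
          · rw [if_pos hc] at h1 h2
            exact anc_total h1 h2
          · rw [if_neg hc] at h1 h2
            by_cases hc2 : c.val < n + Lg n
            · rw [if_pos hc2] at h1
              exact h1.elim
            · rw [if_neg hc2] at h1 h2
              exact anc_total h1 h2

end Dle


/-! ### Rank and depth bound -/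

def rnk (n : ℕ) (v : Fin (NN n)) : ℕ :=
  if v.val < n then 2 * Lg n + 2
  else if v.val < n + Lg n then n + Lg n - 1 - v.val
  else if v.val = n + Lg n then Lg n
  else Lg n + 1 + Nat.log 2 (v.val - (n + Lg n))

section Rnk
variable {n : ℕ}

lemma node_log_le (v : Fin (NN n)) (h : n + Lg n < v.val) :
    Nat.log 2 (v.val - (n + Lg n)) ≤ Lg n := by
  have hv := v.2
  unfold NN at hv
  have := Nat.log_lt_of_lt_pow (x := Lg n + 1) (by omega : v.val - (n + Lg n) ≠ 0)
    (by omega : v.val - (n + Lg n) < 2 ^ (Lg n + 1))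
  omega

lemma rnk_lt (v : Fin (NN n)) : rnk n v < 2 * Lg n + 3 := by
  unfold rnk
  split_ifs with h1 h2 h3
  · omega
  · omega
  · omega
  · have := node_log_le v (by omega)
    omega

lemma rnk_strict {u v : Fin (NN n)} (h : dle n u v) (hne : u ≠ v) : rnk n u < rnk n v := by
  unfold dle at h
  unfold rnk
  by_cases hu : u.val < n
  · rw [if_pos hu] at h
    exact absurd h hne
  · rw [if_neg hu] at h
    by_cases hu2 : u.val < n + Lg n
    · rw [if_pos hu2] at h
      rw [if_neg hu, if_pos hu2]
      by_cases hv : v.val < n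
      · rw [if_pos hv]
        omega
      · by_cases hv2 : v.val < n + Lg n
        · rw [if_neg hv, if_pos hv2]
          have h3 := h ⟨by omega, hv2⟩
          have h4 : u.val ≠ v.val := fun hc => hne (Fin.ext hc)
          omega
        · rw [if_neg hv, if_neg hv2]
          split_ifs <;> omega
    · rw [if_neg hu2] at h
      rw [if_neg hu, if_neg hu2]
      by_cases hv : v.val < n
      · rw [if_pos hv]
        split_ifs with h5
        · omega
        · have := node_log_le u (by omega)
          omega
      · by_cases hv2 : v.val < n + Lg n
        · rw [if_neg hv, if_pos hv2] at h
          exact h.elim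
        · rw [if_neg hv, if_neg hv2] at h
          rw [if_neg hv, if_neg hv2]
          have hne2 : u.val - (n + Lg n) ≠ v.val - (n + Lg n) := by
            intro hc
            exact hne (Fin.ext (by omega))
          by_cases hu0 : u.val = n + Lg n
          · rw [if_pos hu0]
            rw [if_neg (by omega : ¬ v.val = n + Lg n)]
            omega
          · rw [if_neg hu0]
            have h2m := anc_two_mul h hne2
            have hv0 : ¬ v.val = n + Lg n := by omega
            rw [if_neg hv0]
            have := anc_log h hne2 (by omega)
            omega

lemma depth_bound (s : Finset (Fin (NN n)))
    (hs : ∀ a ∈ s, ∀ b ∈ s, dle n a b ∨ dle n b a) :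
    s.card ≤ 2 * Lg n + 3 := by
  have := Finset.card_le_card_of_injOn (rnk n) (fun a _ => Finset.mem_range.2 (rnk_lt a))
    (fun a ha b hb hr => by
      by_contra hne
      rcases hs a ha b hb with h | h
      · exact absurd hr (Nat.ne_of_lt (rnk_strict h hne))
      · exact absurd hr.symm (Nat.ne_of_lt (rnk_strict h (Ne.symm hne))))
    (s := s) (t := Finset.range (2 * Lg n + 3))
  simpa using this

/-! ### Comparability of variables in clauses -/

lemma yV_val (t : ℕ) (ht : t < Lg n) : (yV n t).val = n + t := by
  rw [yV, dif_pos ht]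

lemma dle_y_node (t : ℕ) (ht : t < Lg n) (v : Fin (NN n)) (hv : ¬(n ≤ v.val ∧ v.val < n + Lg n)) :
    dle n (yV n t) v := by
  have h1 := yV_val (n := n) t ht
  unfold dle
  rw [if_neg (by omega), if_pos (by omega)]
  intro hc
  omega

lemma dle_node_node (k k' : ℕ) (hk : k < 2^(Lg n + 1)) (hk' : k' < 2^(Lg n + 1))
    (h : anc k k') : dle n (nV n k) (nV n k') := by
  have h1 := nV_val n k hk
  have h2 := nV_val n k' hk'
  unfold dle
  rw [if_neg (by omega), if_neg (by omega), if_neg (by omega), if_neg (by omega)]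
  have e1 : (nV n k).val - (n + Lg n) = k := by omega
  have e2 : (nV n k').val - (n + Lg n) = k' := by omega
  rw [e1, e2]
  exact h

lemma dle_node_x (k : ℕ) (hk : k < 2^(Lg n + 1)) (i : Fin n)
    (h : anc k (2^(Lg n) + i.val)) : dle n (nV n k) (xV n i) := by
  have h1 := nV_val n k hk
  have h2 : (xV n i).val = i.val := rfl
  have hin := i.2
  unfold dle
  rw [if_neg (by omega), if_neg (by omega), if_pos (by omega)]
  have e1 : (nV n k).val - (n + Lg n) = k := by omega
  rw [e1, h2]
  exact h

lemma tri_comp {u w s c p : Fin (NN n)} (h1 : dle n s c) (h2 : dle n s p) (h3 : dle n p c)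
    (hu : u = s ∨ u = c ∨ u = p) (hw : w = s ∨ w = c ∨ w = p) :
    dle n u w ∨ dle n w u := by
  rcases hu with rfl | rfl | rfl <;> rcases hw with rfl | rfl | rfl <;>
    first
      | exact Or.inl (dle_refl _)
      | exact Or.inl h1 | exact Or.inr h1
      | exact Or.inl h2 | exact Or.inr h2
      | exact Or.inl h3 | exact Or.inr h3

lemma clause_comparable : ∀ C ∈ FF n, ∀ u w : Fin (NN n),
    (∃ b1, (u, b1) ∈ C) → (∃ b2, (w, b2) ∈ C) → dle n u w ∨ dle n w u := by
  intro C hC u w hu hw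
  obtain ⟨b1, hu⟩ := hu
  obtain ⟨b2, hw⟩ := hw
  have hp := pow_succ2 (Lg n)
  rcases Finset.mem_union.1 hC with hC | hC
  · obtain ⟨k, hk, hCk⟩ := Finset.mem_biUnion.1 hC
    rw [Finset.mem_Ico] at hk
    have hL1 : 1 ≤ Lg n := by
      by_contra hcon
      have hz : Lg n = 0 := by omega
      rw [hz] at hk; simp at hk; omega
    set t := Lg n - 1 - Nat.log 2 k with htdef
    have ht : t < Lg n := by omega
    have hyn : ∀ k', k' < 2^(Lg n + 1) → dle n (yV n t) (nV n k') := by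
      intro k' hk'
      refine dle_y_node t ht _ ?_
      have := nV_val n k' hk'
      omega
    have hanc1 : anc k (2*k+1) := ⟨1, by rw [pow_one]; omega⟩
    have hanc0 : anc k (2*k) := ⟨1, by rw [pow_one]; omega⟩
    have hd1 : dle n (nV n k) (nV n (2*k+1)) :=
      dle_node_node k (2*k+1) (by omega) (by omega) hanc1
    have hd0 : dle n (nV n k) (nV n (2*k)) :=
      dle_node_node k (2*k) (by omega) (by omega) hanc0
    simp only [muxC, Finset.mem_insert, Finset.mem_singleton] at hCk
    rcases hCk with rfl | rfl | rfl | rfl <;>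
      simp only [Finset.mem_insert, Finset.mem_singleton, Prod.mk.injEq] at hu hw <;>
      [exact tri_comp (hyn _ (by omega)) (hyn _ (by omega)) hd1
        (hu.imp And.left (Or.imp And.left And.left)) (hw.imp And.left (Or.imp And.left And.left));
       exact tri_comp (hyn _ (by omega)) (hyn _ (by omega)) hd1
        (hu.imp And.left (Or.imp And.left And.left)) (hw.imp And.left (Or.imp And.left And.left));
       exact tri_comp (hyn _ (by omega)) (hyn _ (by omega)) hd0
        (hu.imp And.left (Or.imp And.left And.left)) (hw.imp And.left (Or.imp And.left And.left));
       exact tri_comp (hyn _ (by omega)) (hyn _ (by omega)) hd0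
        (hu.imp And.left (Or.imp And.left And.left)) (hw.imp And.left (Or.imp And.left And.left))]
  · obtain ⟨i, hi, hCi⟩ := Finset.mem_biUnion.1 hC
    rw [Finset.mem_range] at hi
    unfold leafC at hCi
    split_ifs at hCi with hin
    · have hdx : dle n (nV n (2^(Lg n) + i)) (xV n ⟨i, hin⟩) :=
        dle_node_x _ (by omega) _ (anc_refl _)
      simp only [Finset.mem_insert, Finset.mem_singleton] at hCi
      rcases hCi with rfl | rfl <;>
        simp only [Finset.mem_insert, Finset.mem_singleton, Prod.mk.injEq] at hu hw <;>
        exact tri_comp hdx (dle_refl _) hdx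
          (hu.imp And.left (fun h2 => Or.inl h2.left)) (hw.imp And.left (fun h2 => Or.inl h2.left))
    · simp only [Finset.mem_singleton] at hCi
      subst hCi
      simp only [Finset.mem_singleton, Prod.mk.injEq] at hu hw
      rw [hu.1, hw.1]
      exact Or.inl (dle_refl _)

end Rnk

def decomp (n : ℕ) : TreeDepthDecomp (cnfPrimal (FF n)) where
  le := dle n
  le_refl := dle_refl
  le_trans := dle_trans
  le_antisymm := dle_antisymm
  ancestors_chain := dle_chain
  adj_comparable := by
    intro u w h
    rw [cnfPrimal, SimpleGraph.fromRel_adj] at h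
    obtain ⟨hne, hrel⟩ := h
    rcases hrel with ⟨C, hC, h1, h2⟩ | ⟨C, hC, h1, h2⟩
    · exact clause_comparable C hC u w h1 h2
    · exact (clause_comparable C hC w u h1 h2).symm


lemma Lg_le (n : ℕ) : Lg n ≤ Nat.log 2 n + 1 := by
  have h := Nat.lt_pow_succ_log_self (b := 2) (by norm_num) n
  exact (Nat.clog_le_iff_le_pow (by norm_num)).2 (le_of_lt h)

end RAG

open RAG in
/-- the random access gadget. There is a constant `c` such that for every
`n` there is a 3-CNF formula with at most `c·(n+1)` variables, among them named pairwise
distinct variables `x₀,…,x_{n-1}` (input), `y₀,…,y_{⌈lg n⌉-1}` (index) and `z` (output),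
such that an assignment of the named variables extends to a satisfying assignment iff
`z = x_{ȳ}` where `ȳ` is the number encoded in binary by the index variables (with
`z = false` required when `ȳ ≥ n`); moreover the primal graph of the formula admits a
tree-depth decomposition of depth `O(log n)`. -/
theorem random_access_gadget :
    ∃ c : ℕ, ∀ n : ℕ,
      ∃ (N : ℕ) (F : Finset (Finset (Fin N × Bool)))
        (x : Fin n → Fin N) (y : Fin (Nat.clog 2 n) → Fin N) (z : Fin N),
        N ≤ c * (n + 1) ∧
        (∀ C ∈ F, C.card ≤ 3) ∧
        Function.Injective (Sum.elim (Sum.elim x y) fun _ : Unit => z) ∧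
        (∀ (a : Fin n → Bool) (b : Fin (Nat.clog 2 n) → Bool) (zv : Bool),
          (∃ σ : Fin N → Bool, (∀ i, σ (x i) = a i) ∧ (∀ j, σ (y j) = b j) ∧
              σ z = zv ∧ SatisfiesCNF F σ) ↔
            zv = if h : (∑ j, if b j then 2 ^ (j : ℕ) else 0) < n
              then a ⟨_, h⟩ else false) ∧
        ∃ D : TreeDepthDecomp (cnfPrimal F), D.DepthLE (c * (Nat.log 2 n + 1)) := by
  refine ⟨10, fun n => ?_⟩
  have hp := pow_succ2 (Lg n)
  have hLlog := Lg_le n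
  have hz1 : (nV n 1).val = n + Lg n + 1 := nV_val n 1 (by have := pow_pos2 (Lg n); omega)
  refine ⟨NN n, FF n, xV n, fun j => yV n j.val, nV n 1, ?_, ?_, ?_, ?_, ?_⟩
  · -- size bound
    by_cases hn : n = 0
    · subst hn
      have : Lg 0 = 0 := by rw [Lg, Nat.clog_zero_right]
      rw [NN, this]
      norm_num
    · have h1 : 2^(Nat.log 2 n) ≤ n := Nat.pow_log_le_self 2 hn
      have h2 : (2:ℕ)^(Lg n) ≤ 2^(Nat.log 2 n + 1) := Nat.pow_le_pow_right (by norm_num) hLlog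
      have h3 := pow_succ2 (Nat.log 2 n)
      have h4 := Nat.log_le_self 2 n
      rw [NN]
      omega
  · -- clause size
    intro C hC
    have c3 : ∀ (p q r : Fin (NN n) × Bool), ({p, q, r} : Finset _).card ≤ 3 := by
      intro p q r
      have h1 := Finset.card_insert_le p ({q, r} : Finset _)
      have h2 := Finset.card_insert_le q ({r} : Finset _)
      have h3 := Finset.card_singleton r
      omega
    rcases Finset.mem_union.1 hC with h | h
    · obtain ⟨k, _, hCk⟩ := Finset.mem_biUnion.1 h
      simp only [muxC, Finset.mem_insert, Finset.mem_singleton] at hCk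
      rcases hCk with rfl | rfl | rfl | rfl <;> exact c3 _ _ _
    · obtain ⟨i, _, hCi⟩ := Finset.mem_biUnion.1 h
      unfold leafC at hCi
      split_ifs at hCi
      · have c2 : ∀ (p q : Fin (NN n) × Bool), ({p, q} : Finset _).card ≤ 3 := by
          intro p q
          have h1 := Finset.card_insert_le p ({q} : Finset _)
          have h3 := Finset.card_singleton q
          omega
        simp only [Finset.mem_insert, Finset.mem_singleton] at hCi
        rcases hCi with rfl | rfl <;> exact c2 _ _
      · simp only [Finset.mem_singleton] at hCi
        subst hCi
        simp
  · -- injectivity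
    intro p q h
    rcases p with (i | j) | u <;> rcases q with (i' | j') | u' <;>
      simp only [Sum.elim_inl, Sum.elim_inr] at h
    · have hv := congrArg Fin.val h
      have : i = i' := Fin.ext (by simpa [xV] using hv)
      rw [this]
    · exfalso
      have hv := congrArg Fin.val h
      rw [show (xV n i).val = i.val from rfl, yV_val _ j'.isLt] at hv
      have := i.isLt
      omega
    · exfalso
      have hv := congrArg Fin.val h
      rw [show (xV n i).val = i.val from rfl, hz1] at hv
      have h2 : i.val < n := i.isLt
      omega
    · exfalso
      have hv := congrArg Fin.val h
      rw [show (xV n i').val = i'.val from rfl, yV_val _ j.isLt] at hv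
      have := i'.isLt
      omega
    · have hv := congrArg Fin.val h
      rw [yV_val _ j.isLt, yV_val _ j'.isLt] at hv
      have : j = j' := Fin.ext (by omega)
      rw [this]
    · exfalso
      have hv := congrArg Fin.val h
      rw [yV_val _ j.isLt, hz1] at hv
      have h2 : j.val < Lg n := j.isLt
      omega
    · exfalso
      have hv := congrArg Fin.val h
      rw [show (xV n i').val = i'.val from rfl, hz1] at hv
      have h2 : i'.val < n := i'.isLt
      omega
    · exfalso
      have hv := congrArg Fin.val h
      rw [yV_val _ j'.isLt, hz1] at hv
      have h2 : j'.val < Lg n := j'.isLt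
      omega
    · exact congrArg Sum.inr (Subsingleton.elim u u')
  · -- semantics
    intro a b zv
    set β := bext n b with hβ
    have hmsum : (∑ j, if b j then 2^(j:ℕ) else 0) = mOf n β := by
      rw [mOf, ← Fin.sum_univ_eq_sum_range (fun j => if β j then 2^j else 0) (Lg n)]
      refine Finset.sum_congr rfl fun j _ => ?_
      have hbj : β j.val = b j := by
        rw [hβ]; unfold bext; rw [dif_pos (show (j:ℕ) < Lg n from j.isLt)]
        exact congrArg b (Fin.eta j j.isLt)
      rw [hbj]
    have hrhs : (if h : (∑ j, if b j then 2^(j:ℕ) else 0) < n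
        then a ⟨_, h⟩ else false) = leafVal n a (mOf n β) := by
      simp only [hmsum]
      rw [leafVal]
    rw [hrhs]
    constructor
    · rintro ⟨σ, hxσ, hyσ, hzσ, hsat⟩
      rw [← hzσ]
      have hforced := forced_all n a b σ hsat hxσ hyσ (Lg n) le_rfl 1 le_rfl
        (by rw [Nat.log_one_right]; omega)
      rw [hforced, ← hβ]
      exact node_root n a β
    · intro hzv
      refine ⟨asg n a b (mOf n β), asg_x n a b _, fun j => ?_, ?_, ?_⟩
      · rw [asg_y n a b _ j.val j.isLt]
        exact congrArg b (Fin.eta j j.isLt)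
      · rw [asg_n n a b _ 1 (by have := pow_pos2 (Lg n); omega), node_root n a β, hzv]
      · rw [hβ]
        exact extends_sat n a b
  · -- tree-depth
    refine ⟨decomp n, fun s hs => ?_⟩
    have hb := depth_bound s hs
    omega
end

section
/- If a graph G on n vertices has a tree decomposition of width k whose tree is a rooted full binary tree of depth O(log n), then the tree-depth of G is O(k · log n). Consequently, tree-depth of G is at most c · (treewidth(G)+1) · log n for some absolute constant c (using that any tree admits a logarithmic-depth tree decomposition of constant width). -/
/-- The rooted full binary tree of depth `d`, as a graph: nodes are lists of booleans of
length `< d` (the root is `[]`), and each node `a` is adjacent to its children `x :: a`. -/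
def fullBinTree (d : ℕ) : SimpleGraph {l : List Bool // l.length < d} :=
  SimpleGraph.fromRel fun a b => ∃ x : Bool, b.1 = x :: a.1

structure PartialTDD {V : Type} (G : SimpleGraph V) (S : Finset V) (d : ℕ) where
  le : V → V → Prop
  supp : ∀ {a b}, le a b → a ∈ S ∧ b ∈ S
  refl : ∀ a ∈ S, le a a
  trans : ∀ {a b c}, le a b → le b c → le a c
  antisymm : ∀ {a b}, le a b → le b a → a = b
  chain : ∀ {a b c}, le a c → le b c → le a b ∨ le b a
  adj : ∀ {u w}, u ∈ S → w ∈ S → G.Adj u w → le u w ∨ le w u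
  depth : ∀ s : Finset V, (∀ a ∈ s, ∀ b ∈ s, le a b ∨ le b a) → s.card ≤ d

def HasPTD {V : Type} (G : SimpleGraph V) (S : Finset V) (d : ℕ) : Prop :=
  Nonempty (PartialTDD G S d)

lemma ptd_empty {V : Type} (G : SimpleGraph V) (d : ℕ) : HasPTD G ∅ d := by
  refine ⟨⟨fun _ _ => False, by simp, by simp, by simp, by simp, by simp, by simp, ?_⟩⟩
  intro s hs
  have : s = ∅ := Finset.eq_empty_of_forall_notMem fun a ha => by
    rcases hs a ha a ha with h | h <;> exact h
  simp [this]

lemma ptd_weaken {V : Type} {G : SimpleGraph V} {S : Finset V} {d d' : ℕ}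
    (h : HasPTD G S d) (hd : d ≤ d') : HasPTD G S d' := by
  obtain ⟨P⟩ := h
  exact ⟨⟨P.le, P.supp, P.refl, P.trans, P.antisymm, P.chain, P.adj,
    fun s hs => le_trans (P.depth s hs) hd⟩⟩

lemma ptd_glue {V ι : Type} {G : SimpleGraph V} (A : Finset V) (f : V → ι) (d : ℕ)
    [DecidableEq ι]
    (hedge : ∀ u ∈ A, ∀ w ∈ A, G.Adj u w → f u = f w)
    (P : ∀ t : ι, PartialTDD G (A.filter (fun v => f v = t)) d) :
    HasPTD G A d := by
  classical
  have hm : ∀ {a b t}, (P t).le a b → a ∈ A ∧ b ∈ A ∧ f a = t ∧ f b = t := by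
    intro a b t h
    obtain ⟨h1, h2⟩ := (P t).supp h
    simp only [Finset.mem_filter] at h1 h2
    exact ⟨h1.1, h2.1, h1.2, h2.2⟩
  refine ⟨⟨fun a b => (P (f a)).le a b, ?_, ?_, ?_, ?_, ?_, ?_, ?_⟩⟩
  · intro a b h; obtain ⟨h1, h2, _, _⟩ := hm h; exact ⟨h1, h2⟩
  · intro a ha; exact (P (f a)).refl a (Finset.mem_filter.2 ⟨ha, rfl⟩)
  · intro a b c h1 h2
    have hfb := (hm h1).2.2.2
    rw [hfb] at h2
    exact (P (f a)).trans h1 h2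
  · intro a b h1 h2
    have hfb := (hm h1).2.2.2
    rw [hfb] at h2
    exact (P (f a)).antisymm h1 h2
  · intro a b c h1 h2
    have e1 := (hm h1).2.2.2  -- f c = f a
    have e2 := (hm h2).2.2.2  -- f c = f b
    have e : f b = f a := e2 ▸ e1
    rw [e] at h2
    show (P (f a)).le a b ∨ (P (f b)).le b a
    rw [e]
    exact (P (f a)).chain h1 h2
  · intro u w hu hw hadj
    have e := hedge u hu w hw hadj
    have h := (P (f u)).adj (Finset.mem_filter.2 ⟨hu, rfl⟩)
      (Finset.mem_filter.2 ⟨hw, e.symm⟩) hadj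
    show (P (f u)).le u w ∨ (P (f w)).le w u
    rwa [e] at h ⊢
  · intro s hs
    rcases s.eq_empty_or_nonempty with rfl | ⟨a0, ha0⟩
    · simp
    have hf : ∀ a ∈ s, f a = f a0 := by
      intro a ha
      rcases hs a ha a0 ha0 with h | h
      · exact ((hm h).2.2.2).symm
      · exact ((hm h).2.2.2)
    refine (P (f a0)).depth s ?_
    intro a ha b hb
    have h2 : (P (f a)).le a b ∨ (P (f b)).le b a := hs a ha b hb
    rw [hf a ha] at h2
    rwa [hf b hb] at h2

lemma ptd_cons {V : Type} [DecidableEq V] {G : SimpleGraph V} (B A : Finset V) {d0 : ℕ}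
    (r : V → ℕ) (hr : Function.Injective r)
    (hP : HasPTD G A d0) : HasPTD G (B ∪ A) (B.card + d0) := by
  classical
  obtain ⟨P⟩ := hP
  set le : V → V → Prop := fun a b =>
    (a ∈ B ∧ b ∈ B ∪ A ∧ (b ∈ B → r a ≤ r b)) ∨ (a ∉ B ∧ b ∉ B ∧ P.le a b) with hle
  refine ⟨⟨le, ?_, ?_, ?_, ?_, ?_, ?_, ?_⟩⟩
  · rintro a b (⟨h1, h2, _⟩ | ⟨h1, h2, h3⟩)
    · exact ⟨Finset.mem_union_left _ h1, h2⟩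
    · obtain ⟨ha, hb⟩ := P.supp h3
      exact ⟨Finset.mem_union_right _ ha, Finset.mem_union_right _ hb⟩
  · intro a ha
    by_cases hB : a ∈ B
    · exact Or.inl ⟨hB, ha, fun _ => le_rfl⟩
    · rcases Finset.mem_union.1 ha with h | h
      · exact absurd h hB
      · exact Or.inr ⟨hB, hB, P.refl a h⟩
  · rintro a b c (⟨h1, h2, h3⟩ | ⟨h1, h2, h3⟩) (⟨g1, g2, g3⟩ | ⟨g1, g2, g3⟩)
    · exact Or.inl ⟨h1, g2, fun hc => le_trans (h3 g1) (g3 hc)⟩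
    · refine Or.inl ⟨h1, Finset.mem_union_right _ (P.supp g3).2, fun hc => absurd hc g2⟩
    · exact absurd g1 h2
    · exact Or.inr ⟨h1, g2, P.trans h3 g3⟩
  · rintro a b (⟨h1, h2, h3⟩ | ⟨h1, h2, h3⟩) (⟨g1, g2, g3⟩ | ⟨g1, g2, g3⟩)
    · exact hr (le_antisymm (h3 g1) (g3 h1))
    · exact absurd h1 g2
    · exact absurd g1 h2
    · exact P.antisymm h3 g3
  · rintro a b c (⟨h1, h2, h3⟩ | ⟨h1, h2, h3⟩) (⟨g1, g2, g3⟩ | ⟨g1, g2, g3⟩)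
    · rcases le_total (r a) (r b) with h | h
      · exact Or.inl (Or.inl ⟨h1, Finset.mem_union_left _ g1, fun _ => h⟩)
      · exact Or.inr (Or.inl ⟨g1, Finset.mem_union_left _ h1, fun _ => h⟩)
    · exact Or.inl (Or.inl ⟨h1, Finset.mem_union_right _ (P.supp g3).1, fun hb => absurd hb g1⟩)
    · exact Or.inr (Or.inl ⟨g1, Finset.mem_union_right _ (P.supp h3).1, fun hb => absurd hb h1⟩)
    · rcases P.chain h3 g3 with h | h
      · exact Or.inl (Or.inr ⟨h1, g1, h⟩)
      · exact Or.inr (Or.inr ⟨g1, h1, h⟩)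
  · intro u w hu hw hadj
    by_cases huB : u ∈ B
    · by_cases hwB : w ∈ B
      · rcases le_total (r u) (r w) with h | h
        · exact Or.inl (Or.inl ⟨huB, hw, fun _ => h⟩)
        · exact Or.inr (Or.inl ⟨hwB, hu, fun _ => h⟩)
      · exact Or.inl (Or.inl ⟨huB, hw, fun hb => absurd hb hwB⟩)
    · by_cases hwB : w ∈ B
      · exact Or.inr (Or.inl ⟨hwB, hu, fun hb => absurd hb huB⟩)
      · have hu' : u ∈ A := (Finset.mem_union.1 hu).resolve_left huB
        have hw' : w ∈ A := (Finset.mem_union.1 hw).resolve_left hwB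
        rcases P.adj hu' hw' hadj with h | h
        · exact Or.inl (Or.inr ⟨huB, hwB, h⟩)
        · exact Or.inr (Or.inr ⟨hwB, huB, h⟩)
  · intro s hs
    have hsplit : s.card = (s.filter (· ∈ B)).card + (s.filter (· ∉ B)).card :=
      (Finset.card_filter_add_card_filter_not _).symm
    have h1 : (s.filter (· ∈ B)).card ≤ B.card :=
      Finset.card_le_card (fun a ha => (Finset.mem_filter.1 ha).2)
    have h2 : (s.filter (· ∉ B)).card ≤ d0 := by
      refine P.depth _ ?_
      intro a ha b hb
      obtain ⟨has, haB⟩ := Finset.mem_filter.1 ha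
      obtain ⟨hbs, hbB⟩ := Finset.mem_filter.1 hb
      rcases hs a has b hbs with (⟨h, _, _⟩ | ⟨_, _, h⟩) | (⟨h, _, _⟩ | ⟨_, _, h⟩)
      · exact absurd h haB
      · exact Or.inl h
      · exact absurd h hbB
      · exact Or.inr h
    omega

lemma ptd_univ_to_decomp {V : Type} [Fintype V] {G : SimpleGraph V} {d : ℕ}
    (h : HasPTD G Finset.univ d) : ∃ D : TreeDepthDecomp G, D.DepthLE d := by
  obtain ⟨P⟩ := h
  exact ⟨⟨P.le, fun a => P.refl a (Finset.mem_univ a), P.trans, P.antisymm, P.chain,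
    fun hadj => P.adj (Finset.mem_univ _) (Finset.mem_univ _) hadj⟩,
    fun s hs => P.depth s hs⟩

def tdBnd (k m : ℕ) : ℕ := if m = 0 then 0 else (k + 1) * (Nat.log 2 m + 1)

lemma tdBnd_mono (k : ℕ) {m m' : ℕ} (h : m ≤ m') : tdBnd k m ≤ tdBnd k m' := by
  unfold tdBnd
  rcases Nat.eq_zero_or_pos m with rfl | hm
  · simp
  have hm' : m' ≠ 0 := by omega
  rw [if_neg (by omega), if_neg hm']
  exact Nat.mul_le_mul_left _ (by have := Nat.log_mono_right (b := 2) h; omega)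

lemma tdBnd_step (k m : ℕ) (hm : 1 ≤ m) : (k + 1) + tdBnd k (m / 2) ≤ tdBnd k m := by
  unfold tdBnd
  rcases eq_or_lt_of_le hm with h1 | h2
  · simp [← h1]
  · have h2' : 2 ≤ m := h2
    have hd : 1 ≤ m / 2 := by omega
    rw [if_neg (by omega), if_neg (by omega)]
    have hlog : Nat.log 2 (m / 2) = Nat.log 2 m - 1 := Nat.log_div_base 2 m
    have hpos : 0 < Nat.log 2 m := Nat.log_pos one_lt_two h2'
    rw [hlog, show Nat.log 2 m - 1 + 1 = Nat.log 2 m by omega, Nat.mul_succ]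
    linarith

lemma tdBnd_le (k m : ℕ) : tdBnd k m ≤ (k + 1) * (Nat.log 2 m + 1) := by
  unfold tdBnd; split
  · positivity
  · exact le_rfl

lemma part2 (V : Type) [Fintype V] (G : SimpleGraph V) (k : ℕ) (hTW : TreewidthLE G k) :
    ∃ D' : TreeDepthDecomp G, D'.DepthLE ((k + 1) * (Nat.log 2 (Fintype.card V) + 1)) := by
  classical
  obtain ⟨ι, T, D, hk⟩ := hTW
  obtain ⟨r, hr⟩ := exists_injective_nat V
  have hT := D.isTree
  obtain ⟨-, huniq⟩ := SimpleGraph.isTree_iff_existsUnique_path.1 hT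
  choose pth hpath hpuniq using huniq
  choose bagOf hbagOf using D.covers_vertex
  set plen : ι → ι → ℕ := fun t s => (pth t s).length with hplen
  set sideOf : ι → ι → ι := fun t s => (pth t s).getVert 1 with hside
  have hlb : ∀ t s (w : T.Walk t s), plen t s ≤ w.length := by
    intro t s w
    have h1 : w.bypass = pth t s := hpuniq t s w.bypass w.bypass_isPath
    calc plen t s = w.bypass.length := by rw [hplen]; simp only []; rw [h1]
    _ ≤ w.length := SimpleGraph.Walk.length_bypass_le w
  have hdec : ∀ t s, s ≠ t → T.Adj t (sideOf t s) ∧ t ∉ (pth (sideOf t s) s).support ∧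
      plen t s = plen (sideOf t s) s + 1 := by
    intro t s hst
    cases hp : pth t s with
    | nil => exact absurd rfl hst
    | @cons _ b _ hadj q =>
      have hq : q.IsPath ∧ t ∉ q.support := by
        have hh := hpath t s
        rw [hp] at hh
        exact ⟨hh.of_cons, ((SimpleGraph.Walk.cons_isPath_iff _ _).1 hh).2⟩
      have hqe : q = pth b s := hpuniq b s q hq.1
      have hsb : sideOf t s = b := by
        rw [hside]; simp only []
        rw [hp, SimpleGraph.Walk.getVert_cons q hadj (by norm_num)]
        exact q.getVert_zero
      rw [hsb]
      refine ⟨hadj, by rw [← hqe]; exact hq.2, ?_⟩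
      rw [hplen]; simp only []
      rw [hp, ← hqe, SimpleGraph.Walk.length_cons]
  have hchar : ∀ t s a, s ≠ t → T.Adj t a → t ∉ (pth a s).support → sideOf t s = a := by
    intro t s a hst hadj hmem
    have hcons : (SimpleGraph.Walk.cons hadj (pth a s)).IsPath :=
      (SimpleGraph.Walk.cons_isPath_iff _ _).2 ⟨hpath a s, hmem⟩
    have he : SimpleGraph.Walk.cons hadj (pth a s) = pth t s := hpuniq t s _ hcons
    rw [hside]; simp only []
    rw [← he, SimpleGraph.Walk.getVert_cons _ hadj one_ne_zero]
    exact (pth a s).getVert_zero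
  have hside_adj : ∀ t s s', s ≠ t → s' ≠ t → T.Adj s s' → sideOf t s' = sideOf t s := by
    intro t s s' hst hs't hadj
    obtain ⟨ha1, ha2, -⟩ := hdec t s hst
    set w : T.Walk (sideOf t s) s' :=
      (pth (sideOf t s) s).append (SimpleGraph.Walk.cons hadj SimpleGraph.Walk.nil) with hw
    have hb : w.bypass = pth (sideOf t s) s' := hpuniq _ s' _ w.bypass_isPath
    have hmem : t ∉ (pth (sideOf t s) s').support := by
      rw [← hb]
      intro hmem
      have h2 := SimpleGraph.Walk.support_bypass_subset w hmem
      rw [hw, SimpleGraph.Walk.support_append] at h2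
      rcases List.mem_append.1 h2 with h | h
      · exact ha2 h
      · simp only [SimpleGraph.Walk.support_cons, SimpleGraph.Walk.support_nil,
          List.tail_cons, List.mem_singleton] at h
        exact hs't h.symm
    exact hchar t s' (sideOf t s) hs't ha1 hmem
  set vside : ι → V → ι := fun t v => sideOf t (bagOf v) with hvs
  have hvside : ∀ t v, v ∉ D.bags t → ∀ s, v ∈ D.bags s → sideOf t s = vside t v := by
    intro t v hvt s hs
    have key : ∀ (a b : {j : ι // j ∈ {j | v ∈ D.bags j}}),
        (T.induce {j | v ∈ D.bags j}).Walk a b → sideOf t a.1 = sideOf t b.1 := by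
      intro a b wab
      induction wab with
      | nil => rfl
      | @cons x y z hxy p ih =>
        refine Eq.trans ?_ ih
        have hadj : T.Adj x.1 y.1 := hxy
        exact (hside_adj t x.1 y.1 (fun he => hvt (he ▸ x.2)) (fun he => hvt (he ▸ y.2)) hadj).symm
    obtain ⟨wab⟩ := (D.bags_connected v).preconnected ⟨s, hs⟩ ⟨bagOf v, hbagOf v⟩
    exact key _ _ wab
  set Dv : ι → V → ℕ := fun t v => sInf ((fun i => plen t i) '' {i | v ∈ D.bags i}) with hDv
  have hDvle : ∀ t v i, v ∈ D.bags i → Dv t v ≤ plen t i := by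
    intro t v i hi
    exact Nat.sInf_le ⟨i, hi, rfl⟩
  have hDvex : ∀ t v, ∃ i, v ∈ D.bags i ∧ plen t i = Dv t v := by
    intro t v
    have hne : ((fun i => plen t i) '' {i | v ∈ D.bags i}).Nonempty :=
      ⟨_, bagOf v, hbagOf v, rfl⟩
    obtain ⟨i, hi, he⟩ := Nat.sInf_mem hne
    exact ⟨i, hi, he⟩
  -- balanced separator
  have SEP : ∀ S : Finset V, ∃ t : ι, ∀ t' : ι,
      2 * (S.filter (fun v => v ∉ D.bags t ∧ vside t v = t')).card ≤ S.card := by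
    intro S
    obtain ⟨t0⟩ : Nonempty ι := hT.isConnected.nonempty
    have hdesc : ∀ t t', S.card < 2 * (S.filter (fun v => v ∉ D.bags t ∧ vside t v = t')).card →
        (∑ v ∈ S, Dv t' v) < ∑ v ∈ S, Dv t v := by
      intro t t' hbig
      set W := S.filter (fun v => v ∉ D.bags t ∧ vside t v = t') with hWdef
      have hWS : W ⊆ S := Finset.filter_subset _ _
      have hWcard : W.card ≤ S.card := Finset.card_le_card hWS
      have hWne : W.Nonempty := by rw [← Finset.card_pos]; omega
      obtain ⟨v0, hv0⟩ := hWne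
      have hv0' := Finset.mem_filter.1 hv0
      have hv0B : v0 ∉ D.bags t := hv0'.2.1
      have hv0side : vside t v0 = t' := hv0'.2.2
      have hb0 : bagOf v0 ≠ t := fun he => hv0B (he ▸ hbagOf v0)
      have hadj : T.Adj t t' := by
        have h3 := (hdec t (bagOf v0) hb0).1
        rwa [show sideOf t (bagOf v0) = t' from hv0side] at h3
      have h1 : ∀ v ∈ W, Dv t' v + 1 ≤ Dv t v := by
        intro v hv
        have hv' := Finset.mem_filter.1 hv
        have hvB : v ∉ D.bags t := hv'.2.1
        have hvside' : vside t v = t' := hv'.2.2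
        obtain ⟨i, hvi, hieq⟩ := hDvex t v
        have hit : i ≠ t := fun he => hvB (he ▸ hvi)
        have hsi : sideOf t i = t' := by rw [hvside t v hvB i hvi]; exact hvside'
        have h3 := (hdec t i hit).2.2
        rw [hsi] at h3
        have h4 := hDvle t' v i hvi
        omega
      have h2 : ∀ v ∈ S \ W, Dv t' v ≤ Dv t v + 1 := by
        intro v hv
        obtain ⟨i, hvi, hieq⟩ := hDvex t v
        have hwalk : plen t' i ≤ plen t i + 1 := by
          have h3 := hlb t' i (SimpleGraph.Walk.cons hadj.symm (pth t i))
          simpa [SimpleGraph.Walk.length_cons] using h3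
        have h4 := hDvle t' v i hvi
        omega
      have e1 : (∑ v ∈ W, Dv t' v) + W.card ≤ ∑ v ∈ W, Dv t v := by
        calc (∑ v ∈ W, Dv t' v) + W.card = ∑ v ∈ W, (Dv t' v + 1) := by
              rw [Finset.sum_add_distrib, Finset.sum_const, smul_eq_mul, mul_one]
        _ ≤ ∑ v ∈ W, Dv t v := Finset.sum_le_sum h1
      have e2 : (∑ v ∈ S \ W, Dv t' v) ≤ (∑ v ∈ S \ W, Dv t v) + (S \ W).card := by
        calc (∑ v ∈ S \ W, Dv t' v) ≤ ∑ v ∈ S \ W, (Dv t v + 1) := Finset.sum_le_sum h2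
        _ = _ := by rw [Finset.sum_add_distrib, Finset.sum_const, smul_eq_mul, mul_one]
      have es1 : (∑ v ∈ S \ W, Dv t v) + ∑ v ∈ W, Dv t v = ∑ v ∈ S, Dv t v :=
        Finset.sum_sdiff hWS
      have es2 : (∑ v ∈ S \ W, Dv t' v) + ∑ v ∈ W, Dv t' v = ∑ v ∈ S, Dv t' v :=
        Finset.sum_sdiff hWS
      have ecard : (S \ W).card = S.card - W.card := Finset.card_sdiff_of_subset hWS
      omega
    suffices H : ∀ N t, (∑ v ∈ S, Dv t v) ≤ N → ∃ t1, ∀ t' : ι,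
        2 * (S.filter (fun v => v ∉ D.bags t1 ∧ vside t1 v = t')).card ≤ S.card by
      exact H _ t0 le_rfl
    intro N
    induction N with
    | zero =>
      intro t ht
      by_cases hgood : ∀ t' : ι,
        2 * (S.filter (fun v => v ∉ D.bags t ∧ vside t v = t')).card ≤ S.card
      · exact ⟨t, hgood⟩
      · push_neg at hgood
        obtain ⟨t', hbig⟩ := hgood
        have := hdesc t t' hbig
        omega
    | succ N ih =>
      intro t ht
      by_cases hgood : ∀ t' : ι,
        2 * (S.filter (fun v => v ∉ D.bags t ∧ vside t v = t')).card ≤ S.card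
      · exact ⟨t, hgood⟩
      · push_neg at hgood
        obtain ⟨t', hbig⟩ := hgood
        have := hdesc t t' hbig
        exact ih t' (by omega)
  -- recursion
  have REC : ∀ n (S : Finset V), S.card ≤ n → HasPTD G S (tdBnd k S.card) := by
    intro n
    induction n with
    | zero =>
      intro S hS
      have hS0 : S = ∅ := Finset.card_eq_zero.1 (le_antisymm hS (Nat.zero_le _))
      rw [hS0]
      simpa [tdBnd] using ptd_empty G 0
    | succ n ih =>
      intro S hS
      rcases S.eq_empty_or_nonempty with rfl | hSne
      · simpa [tdBnd] using ptd_empty G 0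
      obtain ⟨t, hgood⟩ := SEP S
      set B := S ∩ D.bags t with hB
      set A := S.filter (fun v => v ∉ D.bags t) with hA
      have hBA : B ∪ A = S := by
        ext v
        simp only [hB, hA, Finset.mem_inter, Finset.mem_filter, Finset.mem_union]
        tauto
      have hScard : 1 ≤ S.card := Finset.card_pos.2 hSne
      have hfib : ∀ t' : ι, (A.filter (fun v => vside t v = t')).card ≤ S.card / 2 := by
        intro t'
        have he : A.filter (fun v => vside t v = t') =
            S.filter (fun v => v ∉ D.bags t ∧ vside t v = t') := by
          rw [hA, Finset.filter_filter]
        rw [he]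
        have := hgood t'
        omega
      have hfibd : ∀ t' : ι,
          PartialTDD G (A.filter (fun v => vside t v = t')) (tdBnd k (S.card / 2)) := by
        intro t'
        have hlt : (A.filter (fun v => vside t v = t')).card ≤ n := by
          have := hfib t'
          omega
        exact (ptd_weaken (ih _ hlt) (tdBnd_mono k (hfib t'))).some
      have hedge : ∀ u ∈ A, ∀ w ∈ A, G.Adj u w → vside t u = vside t w := by
        intro u hu w hw hadj
        obtain ⟨i, hui, hwi⟩ := D.covers_edge hadj
        have hu' := (Finset.mem_filter.1 hu).2
        have hw' := (Finset.mem_filter.1 hw).2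
        rw [← hvside t u hu' i hui, ← hvside t w hw' i hwi]
      have hglue : HasPTD G A (tdBnd k (S.card / 2)) := ptd_glue A (vside t) _ hedge hfibd
      have hcons := ptd_cons B A r hr hglue
      have hfin : HasPTD G S (B.card + tdBnd k (S.card / 2)) := by rwa [hBA] at hcons
      refine ptd_weaken hfin ?_
      have hBcard : B.card ≤ k + 1 :=
        le_trans (Finset.card_le_card Finset.inter_subset_right) (hk t)
      have hstep := tdBnd_step k S.card hScard
      omega
  have hmain := REC (Fintype.card V) Finset.univ (le_of_eq Finset.card_univ)
  obtain ⟨D', hD'⟩ := ptd_univ_to_decomp hmain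
  refine ⟨D', fun s hs => ?_⟩
  refine le_trans (hD' s hs) ?_
  rw [Finset.card_univ]
  exact tdBnd_le k (Fintype.card V)

open List

lemma suffix_antisymm' {α} {l₁ l₂ : List α} (h1 : l₁ <:+ l₂) (h2 : l₂ <:+ l₁) : l₁ = l₂ :=
  h1.sublist.eq_of_length_le h2.length_le

lemma suffix_comparable {α} {l₁ l₂ l₃ : List α} (h1 : l₁ <:+ l₃) (h2 : l₂ <:+ l₃) :
    l₁ <:+ l₂ ∨ l₂ <:+ l₁ := by
  rcases List.prefix_or_prefix_of_prefix (List.reverse_prefix.2 h1) (List.reverse_prefix.2 h2)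
    with h | h
  · exact Or.inl (by rwa [List.reverse_prefix] at h)
  · exact Or.inr (by rwa [List.reverse_prefix] at h)

lemma part1 (V : Type) [Fintype V] (G : SimpleGraph V) (k d : ℕ)
    (D : TreeDecomp G (fullBinTree d)) (hk : ∀ t, (D.bags t).card ≤ k + 1) :
    ∃ D' : TreeDepthDecomp G, D'.DepthLE ((k + 1) * d) := by
  classical
  obtain ⟨r, hr⟩ := exists_injective_nat V
  -- choose topmost bag for each vertex
  have htopex : ∀ v, ∃ i, v ∈ D.bags i ∧ ∀ j, v ∈ D.bags j → i.1.length ≤ j.1.length := by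
    intro v
    set s : Set ℕ := {n | ∃ i, v ∈ D.bags i ∧ i.1.length = n} with hs
    have hne : s.Nonempty := by
      obtain ⟨i, hi⟩ := D.covers_vertex v
      exact ⟨i.1.length, i, hi, rfl⟩
    obtain ⟨i, hi, hlen⟩ := Nat.sInf_mem hne
    exact ⟨i, hi, fun j hj => hlen ▸ Nat.sInf_le ⟨j, hj, rfl⟩⟩
  choose top htop hmin using htopex
  -- the top bag is a suffix of every bag containing v
  have hsuf : ∀ v (i : {l : List Bool // l.length < d}), v ∈ D.bags i →
      (top v).1 <:+ i.1 := by
    intro v i hi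
    set A : Set {l : List Bool // l.length < d} := {j | v ∈ D.bags j} with hA
    have hstep : ∀ (a b : ↑A), ((fullBinTree d).induce A).Walk a b →
        (top v).1 <:+ a.1.1 → (top v).1 <:+ b.1.1 := by
      intro a b w
      induction w with
      | nil => exact id
      | @cons x y z hadj p ih =>
        intro hx
        apply ih
        have : (fullBinTree d).Adj x.1 y.1 := hadj
        rw [fullBinTree, SimpleGraph.fromRel_adj] at this
        rcases this.2 with ⟨c, hc⟩ | ⟨c, hc⟩
        · rw [hc]; exact hx.trans (List.suffix_cons c _)
        · have hylen : (top v).1.length ≤ y.1.1.length := hmin v y.1 y.2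
          rw [hc] at hx
          obtain ⟨t, ht⟩ := hx
          cases t with
          | nil =>
            exfalso
            simp only [List.nil_append] at ht
            have := congrArg List.length ht
            simp at this; omega
          | cons hd tl =>
            rw [List.cons_append] at ht
            injection ht with _ ht2
            exact ⟨tl, ht2⟩
    have hreach := (D.bags_connected v).preconnected ⟨top v, htop v⟩ ⟨i, hi⟩
    obtain ⟨w⟩ := hreach
    exact hstep _ _ w (List.suffix_refl _)
  -- comparability of tops
  have hcmp : ∀ {u w : V}, G.Adj u w →
      (top u).1 <:+ (top w).1 ∨ (top w).1 <:+ (top u).1 := by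
    intro u w h
    obtain ⟨i, hu, hw⟩ := D.covers_edge h
    exact suffix_comparable (hsuf u i hu) (hsuf w i hw)
  have topeq : ∀ {u w : V}, (top u).1 = (top w).1 → top u = top w := fun h => Subtype.ext h
  set le : V → V → Prop := fun u w => (top u).1 <:+ (top w).1 ∧ (top u = top w → r u ≤ r w)
    with hle
  have hchain : ∀ {u w : V}, ((top u).1 <:+ (top w).1 ∨ (top w).1 <:+ (top u).1) →
      le u w ∨ le w u := by
    intro u w h
    by_cases he : top u = top w
    · rcases le_total (r u) (r w) with h' | h'
      · exact Or.inl ⟨he ▸ List.suffix_refl _, fun _ => h'⟩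
      · exact Or.inr ⟨he ▸ List.suffix_refl _, fun _ => h'⟩
    · rcases h with h | h
      · exact Or.inl ⟨h, fun e => absurd e he⟩
      · exact Or.inr ⟨h, fun e => absurd e (fun e' => he e'.symm)⟩
  refine ⟨⟨le, ?_, ?_, ?_, ?_, ?_⟩, ?_⟩
  · exact fun a => ⟨List.suffix_refl _, fun _ => le_refl _⟩
  · rintro a b c ⟨h1, h1'⟩ ⟨h2, h2'⟩
    refine ⟨h1.trans h2, fun he => ?_⟩
    have hb : top b = top a := by
      apply topeq
      exact suffix_antisymm' (h2.trans (he ▸ List.suffix_refl _ : (top c).1 <:+ (top a).1)) h1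
    exact le_trans (h1' (hb.symm)) (h2' (hb.trans he))
  · rintro a b ⟨h1, h1'⟩ ⟨h2, h2'⟩
    have he : top a = top b := topeq (suffix_antisymm' h1 h2)
    exact hr (le_antisymm (h1' he) (h2' he.symm))
  · rintro a b c ⟨h1, _⟩ ⟨h2, _⟩
    exact hchain (suffix_comparable h1 h2)
  · intro u w h
    exact hchain (hcmp h)
  · -- depth bound
    intro s hs
    have hfib : ∀ i ∈ s.image top, (s.filter (fun v => top v = i)).card ≤ k + 1 := by
      intro i _
      refine le_trans (Finset.card_le_card ?_) (hk i)
      intro v hv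
      obtain ⟨_, hv2⟩ := Finset.mem_filter.1 hv
      exact hv2 ▸ htop v
    have h1 : s.card ≤ (k + 1) * (s.image top).card :=
      Finset.card_le_mul_card_image s (k + 1) hfib
    have h2 : (s.image top).card ≤ d := by
      set I := s.image top with hI
      have hIcmp : ∀ i ∈ I, ∀ j ∈ I, i.1 <:+ j.1 ∨ j.1 <:+ i.1 := by
        intro i hi j hj
        obtain ⟨a, ha, rfl⟩ := Finset.mem_image.1 hi
        obtain ⟨b, hb, rfl⟩ := Finset.mem_image.1 hj
        rcases hs a ha b hb with ⟨h, _⟩ | ⟨h, _⟩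
        · exact Or.inl h
        · exact Or.inr h
      have hinj : Set.InjOn (fun i : {l : List Bool // l.length < d} => i.1.length) I := by
        intro i hi j hj he
        rcases hIcmp i (by exact_mod_cast hi) j (by exact_mod_cast hj) with h | h
        · exact Subtype.ext (h.sublist.eq_of_length_le (le_of_eq he.symm))
        · exact Subtype.ext (h.sublist.eq_of_length_le (le_of_eq he)).symm
      have := Finset.card_image_of_injOn hinj
      rw [← this]
      refine le_trans (Finset.card_le_card (fun n hn => ?_)) (le_of_eq (Finset.card_range d))
      obtain ⟨i, _, rfl⟩ := Finset.mem_image.1 hn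
      exact Finset.mem_range.2 i.2
    calc s.card ≤ (k + 1) * (s.image top).card := h1
      _ ≤ (k + 1) * d := Nat.mul_le_mul_left _ h2

/-- there is an absolute constant `c` such that:
(1) if a graph `G` has a tree decomposition of width `k` whose tree is the rooted full
binary tree of depth `d`, then `G` has tree-depth at most `c·(k+1)·d` (so depth
`O(log n)` yields tree-depth `O(k·log n)`); and consequently
(2) every finite graph `G` on `n` vertices of treewidth at most `k` has tree-depth at most
`c·(k+1)·(log n + 1)`. -/
theorem treedepth_le_const_mul_treewidth_mul_log :
    ∃ c : ℕ,
      (∀ (V : Type) [Fintype V], ∀ (G : SimpleGraph V) (k d : ℕ)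
        (D : TreeDecomp G (fullBinTree d)), (∀ t, (D.bags t).card ≤ k + 1) →
        ∃ D' : TreeDepthDecomp G, D'.DepthLE (c * (k + 1) * d)) ∧
      (∀ (V : Type) [Fintype V], ∀ (G : SimpleGraph V) (k : ℕ),
        TreewidthLE G k →
        ∃ D' : TreeDepthDecomp G,
          D'.DepthLE (c * (k + 1) * (Nat.log 2 (Fintype.card V) + 1))) := by
  refine ⟨1, ?_, ?_⟩
  · intro V _ G k d D hk
    obtain ⟨D', h⟩ := part1 V G k d D hk
    exact ⟨D', by simpa using h⟩
  · intro V _ G k h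
    obtain ⟨D', h'⟩ := part2 V G k h
    exact ⟨D', by simpa using h'⟩
end
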